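/- arXiv:2109.08393 — 4 statements merged into one kernel-verified Lean document; each statement's English description precedes it below -/
import Mathlib

section
/- Assume E[φ(X)² exp(-θ·X)] < ∞ for all θ ∈ R^d and P(φ(X) ≠ 0) > 0, where X ~ N(0,I_d). Then v(θ) = E[φ(X)² exp(-X·θ + ‖θ‖²/2)] is strongly convex; in particular its Hessian ∇²v(θ) = E[(I_d + (θ-X)(θ-X)ᵀ) φ(X)² exp(-X·θ + ‖θ‖²/2)] satisfies ∇²v(θ) ⪰ v(θ) I_d ≻ 0 for all θ. -/
open MeasureTheory Real RealInnerProductSpace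

noncomputable def stdGaussDensity (d : ℕ) (x : EuclideanSpace ℝ (Fin d)) : ℝ :=
  (2 * Real.pi) ^ (-(d : ℝ) / 2) * Real.exp (-‖x‖ ^ 2 / 2)

noncomputable def secondMoment (d : ℕ) (φ : EuclideanSpace ℝ (Fin d) → ℝ)
    (θ : EuclideanSpace ℝ (Fin d)) : ℝ :=
  ∫ x, (φ x) ^ 2 * Real.exp (-⟪x, θ⟫ + ‖θ‖ ^ 2 / 2) * stdGaussDensity d x

namespace StmtAux

/-- The integrand of `secondMoment`. -/
noncomputable def smInt (d : ℕ) (φ : EuclideanSpace ℝ (Fin d) → ℝ)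
    (θ x : EuclideanSpace ℝ (Fin d)) : ℝ :=
  (φ x) ^ 2 * Real.exp (-⟪x, θ⟫ + ‖θ‖ ^ 2 / 2) * stdGaussDensity d x

variable {d : ℕ} {φ : EuclideanSpace ℝ (Fin d) → ℝ}

lemma gauss_pos (x : EuclideanSpace ℝ (Fin d)) : 0 < stdGaussDensity d x := by
  unfold stdGaussDensity; positivity

lemma gauss_meas : Measurable (stdGaussDensity d) := by
  unfold stdGaussDensity; fun_prop

lemma inner_meas (θ : EuclideanSpace ℝ (Fin d)) :
    Measurable fun x : EuclideanSpace ℝ (Fin d) => (⟪x, θ⟫ : ℝ) :=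
  (continuous_id.inner continuous_const).measurable

lemma smInt_nonneg (θ x : EuclideanSpace ℝ (Fin d)) : 0 ≤ smInt d φ θ x := by
  unfold smInt
  have := gauss_pos (d := d) x
  positivity

lemma smInt_meas (hφ : Measurable φ) (θ : EuclideanSpace ℝ (Fin d)) :
    Measurable (smInt d φ θ) := by
  unfold smInt
  exact ((hφ.pow_const 2).mul (((inner_meas θ).neg.add_const _).exp)).mul gauss_meas

lemma smInt_mul_exp_integrable
    (hint : ∀ θ : EuclideanSpace ℝ (Fin d),
      Integrable (fun x => (φ x) ^ 2 * Real.exp (-⟪θ, x⟫) * stdGaussDensity d x))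
    (θ η : EuclideanSpace ℝ (Fin d)) :
    Integrable (fun x => smInt d φ θ x * Real.exp ⟪η, x⟫) := by
  have h := (hint (θ - η)).const_mul (Real.exp (‖θ‖ ^ 2 / 2))
  refine h.congr (Filter.Eventually.of_forall fun x => ?_)
  unfold smInt
  simp only
  rw [inner_sub_left, real_inner_comm θ x]
  rw [show -(⟪θ, x⟫ - ⟪η, x⟫) = (-⟪θ, x⟫ + ‖θ‖ ^ 2 / 2) + ⟪η, x⟫ - ‖θ‖ ^ 2 / 2 by ring,
    Real.exp_sub, Real.exp_add]
  have h1 := (Real.exp_pos (‖θ‖ ^ 2 / 2)).ne'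
  field_simp

lemma smInt_integrable
    (hint : ∀ θ : EuclideanSpace ℝ (Fin d),
      Integrable (fun x => (φ x) ^ 2 * Real.exp (-⟪θ, x⟫) * stdGaussDensity d x))
    (θ : EuclideanSpace ℝ (Fin d)) : Integrable (smInt d φ θ) := by
  have h := smInt_mul_exp_integrable hint θ 0
  simpa using h

lemma exp_quad_ineq {a b s t₁ t₂ Dv : ℝ} (ha : 0 ≤ a) (hb : 0 ≤ b) (hab : a + b = 1)
    (hs : 0 ≤ s) (hD : 0 ≤ Dv) (hsum : s + Dv = a * t₁ + b * t₂) :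
    Real.exp s + Dv ≤ a * Real.exp t₁ + b * Real.exp t₂ := by
  have h1 : Real.exp (a * t₁ + b * t₂) ≤ a * Real.exp t₁ + b * Real.exp t₂ := by
    simpa using convexOn_exp.2 (Set.mem_univ t₁) (Set.mem_univ t₂) ha hb hab
  have h2 : Real.exp (s + Dv) = Real.exp s * Real.exp Dv := Real.exp_add s Dv
  have h3 : Dv + 1 ≤ Real.exp Dv := Real.add_one_le_exp Dv
  have h4 : 1 ≤ Real.exp s := Real.one_le_exp hs
  rw [hsum] at h2
  nlinarith [mul_le_mul_of_nonneg_left h3 (Real.exp_pos s).le, mul_le_mul_of_nonneg_right h4 hD]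

lemma norm_combo_sq {a b : ℝ} (hab : a + b = 1) (u v : EuclideanSpace ℝ (Fin d)) :
    ‖a • u + b • v‖ ^ 2 = a * ‖u‖ ^ 2 + b * ‖v‖ ^ 2 - a * b * ‖u - v‖ ^ 2 := by
  have hb : b = 1 - a := by linarith
  subst hb
  rw [← real_inner_self_eq_norm_sq, ← real_inner_self_eq_norm_sq,
    ← real_inner_self_eq_norm_sq, ← real_inner_self_eq_norm_sq]
  simp only [inner_add_left, inner_add_right, inner_sub_left, inner_sub_right,
    real_inner_smul_left, real_inner_smul_right, real_inner_comm u v]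
  ring

/-- exponent identity -/
lemma exp_arg_eq (θ x : EuclideanSpace ℝ (Fin d)) :
    -⟪x, θ⟫ + ‖θ‖ ^ 2 / 2 = ‖θ - x‖ ^ 2 / 2 - ‖x‖ ^ 2 / 2 := by
  have h := norm_sub_sq_real θ x
  have hsym : (⟪x, θ⟫ : ℝ) = ⟪θ, x⟫ := real_inner_comm θ x
  rw [hsym]
  linarith

lemma pointwise_sc {a b : ℝ} (ha : 0 ≤ a) (hb : 0 ≤ b) (hab : a + b = 1)
    (θ₁ θ₂ x : EuclideanSpace ℝ (Fin d)) :
    Real.exp (-⟪x, a • θ₁ + b • θ₂⟫ + ‖a • θ₁ + b • θ₂‖ ^ 2 / 2)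
      + a * b * (Real.exp (-(‖x‖ ^ 2) / 2) * (‖θ₁ - θ₂‖ ^ 2 / 2))
    ≤ a * Real.exp (-⟪x, θ₁⟫ + ‖θ₁‖ ^ 2 / 2) + b * Real.exp (-⟪x, θ₂⟫ + ‖θ₂‖ ^ 2 / 2) := by
  have hcomb : a • θ₁ + b • θ₂ - x = a • (θ₁ - x) + b • (θ₂ - x) := by
    have hx : a • θ₁ + b • θ₂ - x = a • θ₁ + b • θ₂ - (a + b) • x := by
      rw [hab, one_smul]
    rw [hx, add_smul, smul_sub, smul_sub]
    abel
  have hdiff : (θ₁ - x) - (θ₂ - x) = θ₁ - θ₂ := sub_sub_sub_cancel_right θ₁ θ₂ x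
  have hid := norm_combo_sq hab (θ₁ - x) (θ₂ - x)
  rw [hdiff, ← hcomb] at hid
  set s : ℝ := ‖a • θ₁ + b • θ₂ - x‖ ^ 2 / 2 with hs
  set t₁ : ℝ := ‖θ₁ - x‖ ^ 2 / 2 with ht₁
  set t₂ : ℝ := ‖θ₂ - x‖ ^ 2 / 2 with ht₂
  set Dv : ℝ := a * b * (‖θ₁ - θ₂‖ ^ 2 / 2) with hDv
  have key : Real.exp s + Dv ≤ a * Real.exp t₁ + b * Real.exp t₂ := by
    refine exp_quad_ineq ha hb hab (by positivity) (by positivity) ?_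
    rw [hs, ht₁, ht₂, hDv]
    nlinarith [hid]
  rw [exp_arg_eq (a • θ₁ + b • θ₂) x, exp_arg_eq θ₁ x, exp_arg_eq θ₂ x]
  have hneg : Real.exp (-(‖x‖ ^ 2) / 2) = (Real.exp (‖x‖ ^ 2 / 2))⁻¹ := by
    rw [neg_div, Real.exp_neg]
  rw [hneg]
  simp only [Real.exp_sub, div_eq_mul_inv]
  have hc := Real.exp_pos (‖x‖ ^ 2 / 2)
  have hkey := mul_le_mul_of_nonneg_right key (inv_nonneg.mpr hc.le)
  rw [hs, ht₁, ht₂, hDv] at hkey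
  refine le_trans (le_of_eq (by ring)) (le_trans hkey (le_of_eq (by ring)))

lemma support_pos_of_hpos
    (hpos : 0 < ∫ x in {x | φ x ≠ 0}, stdGaussDensity d x) :
    0 < (volume : Measure (EuclideanSpace ℝ (Fin d))) {x | φ x ≠ 0} := by
  rw [pos_iff_ne_zero]
  intro h0
  rw [setIntegral_measure_zero _ h0] at hpos
  exact lt_irrefl 0 hpos

/-- positivity of integrals of the form `∫ φ² · (positive weight)`. -/
lemma integral_phi_sq_mul_pos
    (hpos : 0 < ∫ x in {x | φ x ≠ 0}, stdGaussDensity d x)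
    (w : EuclideanSpace ℝ (Fin d) → ℝ) (hw : ∀ x, 0 < w x)
    (hi : Integrable (fun x => (φ x) ^ 2 * w x)) :
    0 < ∫ x, (φ x) ^ 2 * w x := by
  rw [integral_pos_iff_support_of_nonneg (fun x => by have := (hw x).le; positivity) hi]
  have hsupp : (Function.support fun x => (φ x) ^ 2 * w x) = {x | φ x ≠ 0} := by
    ext x
    simp only [Function.mem_support, Set.mem_setOf_eq, mul_ne_zero_iff]
    constructor
    · intro h
      exact pow_ne_zero_iff (n := 2) (by norm_num) |>.mp h.1
    · intro h
      exact ⟨pow_ne_zero _ h, (hw x).ne'⟩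
  rw [hsupp]
  exact support_pos_of_hpos hpos

lemma sq_le_two_exp (t : ℝ) : t ^ 2 ≤ 2 * Real.exp t + 2 * Real.exp (-t) := by
  rcases le_total 0 t with ht | ht
  · have h := Real.quadratic_le_exp_of_nonneg ht
    nlinarith [Real.exp_pos (-t)]
  · have h := Real.quadratic_le_exp_of_nonneg (neg_nonneg.mpr ht)
    nlinarith [Real.exp_pos t]

end StmtAux

set_option maxHeartbeats 1000000 in
/-- `v` is strongly convex and its Hessian
`∇²v(θ) = E[(I_d + (θ-X)(θ-X)ᵀ) φ(X)² exp(-X·θ + ‖θ‖²/2)]` satisfies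
`∇²v(θ) ⪰ v(θ) I_d ≻ 0`.  The matrix `I_d + (θ-x)(θ-x)ᵀ` applied to `y` is
`y + ⟪θ-x, y⟫ (θ-x)`. -/
theorem stmt_3 {d : ℕ} (φ : EuclideanSpace ℝ (Fin d) → ℝ) (hφ : Measurable φ)
    (hint : ∀ θ : EuclideanSpace ℝ (Fin d),
      Integrable (fun x => (φ x) ^ 2 * Real.exp (-⟪θ, x⟫) * stdGaussDensity d x))
    (hpos : 0 < ∫ x in {x | φ x ≠ 0}, stdGaussDensity d x) :
    (∃ m : ℝ, 0 < m ∧ StrongConvexOn Set.univ m (secondMoment d φ)) ∧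
      ∀ θ : EuclideanSpace ℝ (Fin d),
        0 < secondMoment d φ θ ∧
        ∀ y : EuclideanSpace ℝ (Fin d),
          secondMoment d φ θ * ‖y‖ ^ 2 ≤
            ⟪y, ∫ x, ((φ x) ^ 2 * Real.exp (-⟪x, θ⟫ + ‖θ‖ ^ 2 / 2) * stdGaussDensity d x) •
              (y + ⟪θ - x, y⟫ • (θ - x))⟫ := by
  classical
  have hInt : ∀ θ, Integrable (StmtAux.smInt d φ θ) := StmtAux.smInt_integrable hint
  have hsm : ∀ θ, secondMoment d φ θ = ∫ x, StmtAux.smInt d φ θ x := fun θ => rfl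
  -- positivity of v θ
  have hvpos : ∀ θ, 0 < secondMoment d φ θ := by
    intro θ
    rw [hsm]
    have he : StmtAux.smInt d φ θ
        = fun x => (φ x) ^ 2 * (Real.exp (-⟪x, θ⟫ + ‖θ‖ ^ 2 / 2) * stdGaussDensity d x) := by
      funext x; unfold StmtAux.smInt; ring
    rw [he]
    refine StmtAux.integral_phi_sq_mul_pos hpos _
      (fun x => by have := StmtAux.gauss_pos (d := d) x; positivity) ?_
    rw [← he]; exact hInt θ
  -- the strong convexity modulus
  set c : EuclideanSpace ℝ (Fin d) → ℝ :=
    fun x => (φ x) ^ 2 * Real.exp (-(‖x‖ ^ 2) / 2) * stdGaussDensity d x with hc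
  have hc_nonneg : ∀ x, 0 ≤ c x := fun x => by
    have := StmtAux.gauss_pos (d := d) x
    rw [hc]; positivity
  have hc_meas : Measurable c := by
    rw [hc]
    exact ((hφ.pow_const 2).mul
      (((continuous_norm.pow 2).neg.div_const 2).rexp.measurable)).mul StmtAux.gauss_meas
  have hc_le : ∀ x, c x ≤ StmtAux.smInt d φ 0 x := by
    intro x
    have hg := StmtAux.gauss_pos (d := d) x
    have h0 : StmtAux.smInt d φ 0 x = (φ x) ^ 2 * 1 * stdGaussDensity d x := by
      unfold StmtAux.smInt; simp
    have hcx : c x = (φ x) ^ 2 * Real.exp (-(‖x‖ ^ 2) / 2) * stdGaussDensity d x := rfl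
    rw [hcx, h0]
    have he : Real.exp (-(‖x‖ ^ 2) / 2) ≤ 1 := by
      rw [Real.exp_le_one_iff]
      have : (0:ℝ) ≤ ‖x‖ ^ 2 := sq_nonneg _
      linarith
    have hA : (0:ℝ) ≤ (φ x) ^ 2 * stdGaussDensity d x := by positivity
    nlinarith [mul_le_mul_of_nonneg_left he hA]
  have hc_int : Integrable c := by
    refine (hInt 0).mono hc_meas.aestronglyMeasurable (ae_of_all _ fun x => ?_)
    rw [Real.norm_of_nonneg (hc_nonneg x), Real.norm_of_nonneg (StmtAux.smInt_nonneg _ _)]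
    exact hc_le x
  set m : ℝ := ∫ x, c x with hm
  have hm_pos : 0 < m := by
    have he : c = fun x => (φ x) ^ 2 * (Real.exp (-(‖x‖ ^ 2) / 2) * stdGaussDensity d x) := by
      funext x; rw [hc]; ring
    rw [hm, he]
    refine StmtAux.integral_phi_sq_mul_pos hpos _
      (fun x => by have := StmtAux.gauss_pos (d := d) x; positivity) ?_
    rw [← he]; exact hc_int
  constructor
  · refine ⟨m, hm_pos, convex_univ, ?_⟩
    intro θ₁ _ θ₂ _ a b ha hb hab
    simp only [smul_eq_mul]
    rw [hsm, hsm, hsm]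
    have hpt : ∀ x, StmtAux.smInt d φ (a • θ₁ + b • θ₂) x ≤
        a * StmtAux.smInt d φ θ₁ x + b * StmtAux.smInt d φ θ₂ x
          - (a * b * (‖θ₁ - θ₂‖ ^ 2 / 2)) * c x := by
      intro x
      have h := StmtAux.pointwise_sc ha hb hab θ₁ θ₂ x
      have hA : (0:ℝ) ≤ (φ x) ^ 2 * stdGaussDensity d x := by
        have := StmtAux.gauss_pos (d := d) x; positivity
      have h2 := mul_le_mul_of_nonneg_left h hA
      unfold StmtAux.smInt
      rw [hc]
      nlinarith [h2]
    have h1 : Integrable (fun x => a * StmtAux.smInt d φ θ₁ x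
        + b * StmtAux.smInt d φ θ₂ x) :=
      ((hInt θ₁).const_mul a).add ((hInt θ₂).const_mul b)
    have h2 : Integrable (fun x => (a * b * (‖θ₁ - θ₂‖ ^ 2 / 2)) * c x) :=
      hc_int.const_mul _
    have h3 : Integrable (fun x => a * StmtAux.smInt d φ θ₁ x) := (hInt θ₁).const_mul a
    have h4 : Integrable (fun x => b * StmtAux.smInt d φ θ₂ x) := (hInt θ₂).const_mul b
    have hG : Integrable (fun x => a * StmtAux.smInt d φ θ₁ x + b * StmtAux.smInt d φ θ₂ x
        - (a * b * (‖θ₁ - θ₂‖ ^ 2 / 2)) * c x) := h1.sub h2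
    have hle := integral_mono (hInt (a • θ₁ + b • θ₂)) hG hpt
    rw [integral_sub h1 h2, integral_add h3 h4,
      integral_const_mul, integral_const_mul, integral_const_mul] at hle
    rw [← hm] at hle
    nlinarith [hle]
  · intro θ
    refine ⟨hvpos θ, fun y => ?_⟩
    have hgoal_eq : (∫ x, ((φ x) ^ 2 * Real.exp (-⟪x, θ⟫ + ‖θ‖ ^ 2 / 2) * stdGaussDensity d x) •
        (y + ⟪θ - x, y⟫ • (θ - x)))
        = ∫ x, StmtAux.smInt d φ θ x • (y + ⟪θ - x, y⟫ • (θ - x)) := rfl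
    rw [hgoal_eq]
    set k : EuclideanSpace ℝ (Fin d) → EuclideanSpace ℝ (Fin d) :=
      fun x => StmtAux.smInt d φ θ x • (y + ⟪θ - x, y⟫ • (θ - x)) with hk
    -- measurability
    have hw_cont : Continuous fun x : EuclideanSpace ℝ (Fin d) =>
        y + ⟪θ - x, y⟫ • (θ - x) := by
      have h1 : Continuous fun x : EuclideanSpace ℝ (Fin d) => θ - x :=
        continuous_const.sub continuous_id
      exact continuous_const.add ((h1.inner (𝕜 := ℝ) continuous_const).smul h1)
    have hk_meas : Measurable k := by
      rw [hk]
      exact (StmtAux.smInt_meas hφ θ).smul hw_cont.measurable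
    -- the dominating function
    set B : EuclideanSpace ℝ (Fin d) → ℝ := fun x =>
      ‖y‖ * ((1 + 2 * ‖θ‖ ^ 2) * StmtAux.smInt d φ θ x
        + 4 * ∑ i, (StmtAux.smInt d φ θ x * Real.exp (x i)
            + StmtAux.smInt d φ θ x * Real.exp (-(x i)))) with hB
    have hsingle : ∀ (i : Fin d) (x : EuclideanSpace ℝ (Fin d)),
        (⟪EuclideanSpace.single i (1:ℝ), x⟫ : ℝ) = x i := by
      intro i x
      simp [EuclideanSpace.inner_single_left]
    have hB_int : Integrable B := by
      rw [hB]
      refine Integrable.const_mul (Integrable.add ((hInt θ).const_mul _)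
        (Integrable.const_mul (integrable_finset_sum _ fun i _ => ?_) _)) _
      refine Integrable.add ?_ ?_
      · refine (StmtAux.smInt_mul_exp_integrable hint θ (EuclideanSpace.single i 1)).congr
          (ae_of_all _ fun x => by simp only [hsingle])
      · refine (StmtAux.smInt_mul_exp_integrable hint θ
          (-(EuclideanSpace.single i 1))).congr (ae_of_all _ fun x => ?_)
        simp only [inner_neg_left, hsingle]
    -- norm bound
    have hbound : ∀ x, ‖k x‖ ≤ B x := by
      intro x
      have hsm_nn := StmtAux.smInt_nonneg (φ := φ) θ x
      have hxsq : ‖x‖ ^ 2 = ∑ i, (x i) ^ 2 := by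
        rw [EuclideanSpace.norm_eq, Real.sq_sqrt (by positivity)]
        simp [sq_abs]
      have hS : ‖x‖ ^ 2 ≤ ∑ i, (2 * Real.exp (x i) + 2 * Real.exp (-(x i))) := by
        rw [hxsq]
        exact Finset.sum_le_sum fun i _ => StmtAux.sq_le_two_exp (x i)
      have htx : ‖θ - x‖ ^ 2 ≤ 2 * ‖θ‖ ^ 2 + 2 * ‖x‖ ^ 2 := by
        have h1 : ‖θ - x‖ ≤ ‖θ‖ + ‖x‖ := norm_sub_le θ x
        nlinarith [norm_nonneg (θ - x), norm_nonneg θ, norm_nonneg x,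
          mul_self_le_mul_self (norm_nonneg (θ - x)) h1, sq_nonneg (‖θ‖ - ‖x‖)]
      have hwnorm : ‖y + ⟪θ - x, y⟫ • (θ - x)‖ ≤ ‖y‖ * (1 + ‖θ - x‖ ^ 2) := by
        refine le_trans (norm_add_le _ _) ?_
        rw [norm_smul, Real.norm_eq_abs]
        have h2 : |(⟪θ - x, y⟫ : ℝ)| ≤ ‖θ - x‖ * ‖y‖ := abs_real_inner_le_norm _ _
        nlinarith [norm_nonneg (θ - x), norm_nonneg y, abs_nonneg (⟪θ - x, y⟫ : ℝ)]
      have hknorm : ‖k x‖ = StmtAux.smInt d φ θ x * ‖y + ⟪θ - x, y⟫ • (θ - x)‖ := by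
        rw [hk]
        simp only [norm_smul, Real.norm_eq_abs, abs_of_nonneg hsm_nn]
      rw [hknorm, hB]
      beta_reduce
      have hchain : ‖y + ⟪θ - x, y⟫ • (θ - x)‖
          ≤ ‖y‖ * (1 + 2 * ‖θ‖ ^ 2 + 2 * ∑ i, (2 * Real.exp (x i) + 2 * Real.exp (-(x i)))) := by
        refine le_trans hwnorm ?_
        have := norm_nonneg y
        nlinarith [hS, htx]
      have h3 := mul_le_mul_of_nonneg_left hchain hsm_nn
      refine le_trans h3 (le_of_eq ?_)
      have hsum1 : ∑ i, (StmtAux.smInt d φ θ x * Real.exp (x i)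
          + StmtAux.smInt d φ θ x * Real.exp (-(x i)))
          = StmtAux.smInt d φ θ x * ∑ i, (Real.exp (x i) + Real.exp (-(x i))) := by
        rw [Finset.mul_sum]
        exact Finset.sum_congr rfl fun i _ => by ring
      have hsum2 : ∑ i, (2 * Real.exp (x i) + 2 * Real.exp (-(x i)))
          = 2 * ∑ i, (Real.exp (x i) + Real.exp (-(x i))) := by
        rw [Finset.mul_sum]
        exact Finset.sum_congr rfl fun i _ => by ring
      rw [hsum1, hsum2]
      ring
    -- integrability of k
    have hk_int : Integrable k :=
      Integrable.mono' hB_int hk_meas.aestronglyMeasurable (ae_of_all _ hbound)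
    rw [← integral_inner hk_int y]
    rw [hsm θ]
    have hveq : (∫ x, StmtAux.smInt d φ θ x) * ‖y‖ ^ 2
        = ∫ x, StmtAux.smInt d φ θ x * ‖y‖ ^ 2 := by
      rw [integral_mul_const]
    rw [hveq]
    refine integral_mono ((hInt θ).mul_const _) (hk_int.const_inner y) fun x => ?_
    have hky : (⟪y, k x⟫ : ℝ)
        = StmtAux.smInt d φ θ x * (‖y‖ ^ 2 + (⟪θ - x, y⟫ : ℝ) ^ 2) := by
      have hkx : k x = StmtAux.smInt d φ θ x • (y + (⟪θ - x, y⟫ : ℝ) • (θ - x)) := rfl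
      rw [hkx, real_inner_smul_right, inner_add_right, real_inner_smul_right,
        real_inner_self_eq_norm_sq]
      have hcomm : (⟪y, θ - x⟫ : ℝ) = ⟪θ - x, y⟫ := real_inner_comm (θ - x) y
      rw [hcomm]
      ring
    have hnn := StmtAux.smInt_nonneg (φ := φ) θ x
    beta_reduce
    rw [hky]
    nlinarith [sq_nonneg ((⟪θ - x, y⟫ : ℝ))]
end

section
/- Under the assumptions E[φ(X)² exp(-θ·X)] < ∞ for all θ and P(φ(X) ≠ 0) > 0, there exists a unique θ* ∈ R^d minimizing v(θ) = E[φ(X)² exp(-X·θ + ‖θ‖²/2)], and θ* is characterized by ∇v(θ*) = 0. -/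
open MeasureTheory Real RealInnerProductSpace

set_option maxHeartbeats 1000000
set_option synthInstance.maxHeartbeats 400000

section Stmt5Aux

variable {d : ℕ} {φ : EuclideanSpace ℝ (Fin d) → ℝ}

/-- auxiliary weight function -/
noncomputable def cf (φ : EuclideanSpace ℝ (Fin d) → ℝ) (x : EuclideanSpace ℝ (Fin d)) : ℝ :=
  (φ x) ^ 2 * stdGaussDensity d x * Real.exp (-‖x‖ ^ 2 / 2)

lemma gauss_pos (x : EuclideanSpace ℝ (Fin d)) : 0 < stdGaussDensity d x := by
  unfold stdGaussDensity
  positivity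

lemma continuous_gauss : Continuous (stdGaussDensity d) := by
  unfold stdGaussDensity
  exact continuous_const.mul (Real.continuous_exp.comp ((continuous_norm.pow 2).neg.div_const 2))

lemma cf_nonneg (x : EuclideanSpace ℝ (Fin d)) : 0 ≤ cf φ x := by
  unfold cf
  have := gauss_pos (d := d) x
  positivity

lemma cf_pos {x : EuclideanSpace ℝ (Fin d)} (hx : φ x ≠ 0) : 0 < cf φ x := by
  unfold cf
  have h1 : 0 < (φ x) ^ 2 := lt_of_le_of_ne (sq_nonneg _) (Ne.symm (pow_ne_zero 2 hx))
  have := gauss_pos (d := d) x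
  positivity

lemma cf_meas (hφ : Measurable φ) : Measurable (cf φ) := by
  unfold cf
  exact ((hφ.pow_const 2).mul continuous_gauss.measurable).mul
    (Real.continuous_exp.comp ((continuous_norm.pow 2).neg.div_const 2)).measurable

lemma cf_exp_eq (θ x : EuclideanSpace ℝ (Fin d)) :
    cf φ x * Real.exp (‖θ - x‖ ^ 2 / 2)
      = Real.exp (‖θ‖ ^ 2 / 2) * ((φ x) ^ 2 * Real.exp (-⟪θ, x⟫) * stdGaussDensity d x) := by
  have e1 : Real.exp (-‖x‖ ^ 2 / 2) * Real.exp (‖θ - x‖ ^ 2 / 2)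
      = Real.exp (‖θ‖ ^ 2 / 2) * Real.exp (-⟪θ, x⟫) := by
    rw [← Real.exp_add, ← Real.exp_add]
    congr 1
    rw [norm_sub_sq_real]
    ring
  unfold cf
  linear_combination ((φ x) ^ 2 * stdGaussDensity d x) * e1

lemma sm_eq (θ : EuclideanSpace ℝ (Fin d)) :
    secondMoment d φ θ = ∫ x, cf φ x * Real.exp (‖θ - x‖ ^ 2 / 2) := by
  unfold secondMoment
  congr 1
  funext x
  rw [cf_exp_eq, Real.exp_add, real_inner_comm x θ]
  ring

lemma integrable_cf_exp
    (hint : ∀ θ : EuclideanSpace ℝ (Fin d),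
      Integrable (fun x => (φ x) ^ 2 * Real.exp (-⟪θ, x⟫) * stdGaussDensity d x))
    (θ : EuclideanSpace ℝ (Fin d)) :
    Integrable (fun x => cf φ x * Real.exp (‖θ - x‖ ^ 2 / 2)) := by
  have h := ((hint θ).const_mul (Real.exp (‖θ‖ ^ 2 / 2)))
  exact h.congr (Filter.Eventually.of_forall fun x => (cf_exp_eq θ x).symm)

lemma integrable_cf (hφ : Measurable φ)
    (hint : ∀ θ : EuclideanSpace ℝ (Fin d),
      Integrable (fun x => (φ x) ^ 2 * Real.exp (-⟪θ, x⟫) * stdGaussDensity d x)) :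
    Integrable (cf φ) := by
  refine (integrable_cf_exp hint 0).mono' (cf_meas hφ).aestronglyMeasurable
    (Filter.Eventually.of_forall fun x => ?_)
  rw [Real.norm_eq_abs, abs_of_nonneg (cf_nonneg x)]
  exact le_mul_of_one_le_right (cf_nonneg x) (Real.one_le_exp (by positivity))

lemma qid (a b x : EuclideanSpace ℝ (Fin d)) {t s : ℝ} (hts : t + s = 1) :
    ‖(t • a + s • b) - x‖ ^ 2
      = t * ‖a - x‖ ^ 2 + s * ‖b - x‖ ^ 2 - t * s * ‖a - b‖ ^ 2 := by
  have hs' : s = 1 - t := by linarith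
  subst hs'
  have e1 : (t • a + (1 - t) • b) - x = t • (a - x) + (1 - t) • (b - x) := by module
  have e2 : a - b = (a - x) - (b - x) := by abel
  have key : ∀ (u w : EuclideanSpace ℝ (Fin d)),
      ‖t • u + (1 - t) • w‖ ^ 2
        = t * ‖u‖ ^ 2 + (1 - t) * ‖w‖ ^ 2 - t * (1 - t) * ‖u - w‖ ^ 2 := by
    intro u w
    rw [norm_add_sq_real, norm_sub_sq_real, real_inner_smul_left, real_inner_smul_right,
      norm_smul, norm_smul, Real.norm_eq_abs, Real.norm_eq_abs, mul_pow, mul_pow, sq_abs, sq_abs]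
    ring
  rw [e1, e2, key]

lemma exp_comb (a b x : EuclideanSpace ℝ (Fin d)) {t s : ℝ} (ht : 0 ≤ t) (hs : 0 ≤ s)
    (hts : t + s = 1) :
    Real.exp (‖(t • a + s • b) - x‖ ^ 2 / 2)
      ≤ t * Real.exp (‖a - x‖ ^ 2 / 2) + s * Real.exp (‖b - x‖ ^ 2 / 2) := by
  have h2 : ‖(t • a + s • b) - x‖ ^ 2 / 2 ≤ t * (‖a - x‖ ^ 2 / 2) + s * (‖b - x‖ ^ 2 / 2) := by
    rw [qid a b x hts]
    nlinarith [mul_nonneg (mul_nonneg ht hs) (sq_nonneg ‖a - b‖)]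
  calc Real.exp (‖(t • a + s • b) - x‖ ^ 2 / 2)
      ≤ Real.exp (t * (‖a - x‖ ^ 2 / 2) + s * (‖b - x‖ ^ 2 / 2)) := Real.exp_le_exp.2 h2
    _ ≤ t * Real.exp (‖a - x‖ ^ 2 / 2) + s * Real.exp (‖b - x‖ ^ 2 / 2) := by
        have := convexOn_exp.2 (Set.mem_univ (‖a - x‖ ^ 2 / 2)) (Set.mem_univ (‖b - x‖ ^ 2 / 2))
          ht hs hts
        simpa [smul_eq_mul] using this

lemma sm_convex
    (hint : ∀ θ : EuclideanSpace ℝ (Fin d),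
      Integrable (fun x => (φ x) ^ 2 * Real.exp (-⟪θ, x⟫) * stdGaussDensity d x)) :
    ConvexOn ℝ Set.univ (secondMoment d φ) := by
  refine ⟨convex_univ, fun a _ b _ t s ht hs hts => ?_⟩
  simp only [smul_eq_mul, sm_eq]
  calc (∫ x, cf φ x * Real.exp (‖(t • a + s • b) - x‖ ^ 2 / 2))
      ≤ ∫ x, (t * (cf φ x * Real.exp (‖a - x‖ ^ 2 / 2))
          + s * (cf φ x * Real.exp (‖b - x‖ ^ 2 / 2))) := by
        refine integral_mono (integrable_cf_exp hint _)
          (((integrable_cf_exp hint a).const_mul t).add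
            ((integrable_cf_exp hint b).const_mul s)) (fun x => ?_)
        have h1 := exp_comb a b x ht hs hts
        have h2 := cf_nonneg (φ := φ) x
        nlinarith [mul_le_mul_of_nonneg_left h1 h2]
    _ = t * (∫ x, cf φ x * Real.exp (‖a - x‖ ^ 2 / 2))
          + s * (∫ x, cf φ x * Real.exp (‖b - x‖ ^ 2 / 2)) := by
        rw [integral_add ((integrable_cf_exp hint a).const_mul t)
          ((integrable_cf_exp hint b).const_mul s), integral_const_mul, integral_const_mul]


/-- sign vectors used to dominate `exp (K * ‖x‖)` -/
noncomputable def sgnVec (d : ℕ) (K : ℝ) (t : Finset (Fin d)) : EuclideanSpace ℝ (Fin d) :=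
  (WithLp.equiv 2 (Fin d → ℝ)).symm (fun i => if i ∈ t then -K else K)

lemma neg_inner_sgnVec (K : ℝ) (t : Finset (Fin d)) (x : EuclideanSpace ℝ (Fin d)) :
    -⟪sgnVec d K t, x⟫ = (∑ i ∈ t, K * x i) + ∑ i ∈ Finset.univ \ t, -K * x i := by
  have h1 : ⟪sgnVec d K t, x⟫ = ∑ i, (if i ∈ t then -K else K) * x i := by
    simp [sgnVec, PiLp.inner_apply]
    exact Finset.sum_congr rfl fun i _ => by split_ifs <;> ring
  rw [h1, ← Finset.sum_sdiff (Finset.subset_univ t)]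
  have ha : ∑ i ∈ Finset.univ \ t, (if i ∈ t then -K else K) * x i
      = ∑ i ∈ Finset.univ \ t, K * x i :=
    Finset.sum_congr rfl fun i hi => by rw [if_neg (Finset.mem_sdiff.1 hi).2]
  have hb : ∑ i ∈ t, (if i ∈ t then -K else K) * x i = -∑ i ∈ t, K * x i := by
    rw [← Finset.sum_neg_distrib]
    exact Finset.sum_congr rfl fun i hi => by rw [if_pos hi]; ring
  have hc : ∑ i ∈ Finset.univ \ t, -K * x i = -∑ i ∈ Finset.univ \ t, K * x i := by
    rw [← Finset.sum_neg_distrib]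
    exact Finset.sum_congr rfl fun i _ => by ring
  rw [ha, hb, hc]
  ring

lemma norm_le_sum_abs (x : EuclideanSpace ℝ (Fin d)) : ‖x‖ ≤ ∑ i, |x i| := by
  rw [EuclideanSpace.norm_eq]
  have h1 : ∑ i, ‖x i‖ ^ 2 ≤ (∑ i, |x i|) ^ 2 := by
    calc ∑ i, ‖x i‖ ^ 2 = ∑ i, |x i| ^ 2 := by simp [Real.norm_eq_abs]
      _ ≤ (∑ i, |x i|) ^ 2 := Finset.sum_sq_le_sq_sum_of_nonneg fun i _ => abs_nonneg _
  calc Real.sqrt (∑ i, ‖x i‖ ^ 2) ≤ Real.sqrt ((∑ i, |x i|) ^ 2) := Real.sqrt_le_sqrt h1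
    _ = ∑ i, |x i| := Real.sqrt_sq (Finset.sum_nonneg fun i _ => abs_nonneg _)

lemma integrable_weight (hφ : Measurable φ)
    (hint : ∀ θ : EuclideanSpace ℝ (Fin d),
      Integrable (fun x => (φ x) ^ 2 * Real.exp (-⟪θ, x⟫) * stdGaussDensity d x))
    {K : ℝ} (hK : 0 ≤ K) :
    Integrable (fun x : EuclideanSpace ℝ (Fin d) =>
      (φ x) ^ 2 * stdGaussDensity d x * Real.exp (K * ‖x‖)) := by
  set G : EuclideanSpace ℝ (Fin d) → ℝ := fun x =>
    ∑ t ∈ (Finset.univ : Finset (Fin d)).powerset,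
      (φ x) ^ 2 * Real.exp (-⟪sgnVec d K t, x⟫) * stdGaussDensity d x with hG
  have hGint : Integrable G :=
    integrable_finset_sum _ fun t _ => hint (sgnVec d K t)
  have hmeas : AEStronglyMeasurable
      (fun x : EuclideanSpace ℝ (Fin d) =>
        (φ x) ^ 2 * stdGaussDensity d x * Real.exp (K * ‖x‖)) volume := by
    refine (((hφ.pow_const 2).mul continuous_gauss.measurable).mul
      (Real.continuous_exp.comp (continuous_const.mul continuous_norm : Continuous fun a : EuclideanSpace ℝ (Fin d) => K * ‖a‖)).measurable).aestronglyMeasurable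
  refine hGint.mono' hmeas (Filter.Eventually.of_forall fun x => ?_)
  have hg := gauss_pos (d := d) x
  have hnn : (0:ℝ) ≤ (φ x) ^ 2 * stdGaussDensity d x * Real.exp (K * ‖x‖) := by positivity
  rw [Real.norm_eq_abs, abs_of_nonneg hnn]
  have h1 : Real.exp (K * ‖x‖) ≤ ∏ i, (Real.exp (K * x i) + Real.exp (-K * x i)) := by
    calc Real.exp (K * ‖x‖) ≤ Real.exp (K * ∑ i, |x i|) :=
          Real.exp_le_exp.2 (mul_le_mul_of_nonneg_left (norm_le_sum_abs x) hK)
      _ = ∏ i, Real.exp (K * |x i|) := by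
          rw [Finset.mul_sum, Real.exp_sum]
      _ ≤ ∏ i, (Real.exp (K * x i) + Real.exp (-K * x i)) := by
          refine Finset.prod_le_prod (fun i _ => (Real.exp_pos _).le) fun i _ => ?_
          rcases abs_cases (x i) with ⟨h, _⟩ | ⟨h, _⟩
          · rw [h]
            nlinarith [Real.exp_pos (-K * x i)]
          · rw [h, mul_neg, ← neg_mul]
            nlinarith [Real.exp_pos (K * x i)]
  have h2 : ∏ i, (Real.exp (K * x i) + Real.exp (-K * x i))
      = ∑ t ∈ (Finset.univ : Finset (Fin d)).powerset, Real.exp (-⟪sgnVec d K t, x⟫) := by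
    rw [Finset.prod_add]
    refine Finset.sum_congr rfl fun t _ => ?_
    rw [neg_inner_sgnVec, Real.exp_add, Real.exp_sum, Real.exp_sum]
  calc (φ x) ^ 2 * stdGaussDensity d x * Real.exp (K * ‖x‖)
      ≤ (φ x) ^ 2 * stdGaussDensity d x
          * ∑ t ∈ (Finset.univ : Finset (Fin d)).powerset, Real.exp (-⟪sgnVec d K t, x⟫) := by
        rw [← h2]
        exact mul_le_mul_of_nonneg_left h1 (by positivity)
    _ = G x := by
        rw [hG, Finset.mul_sum]
        exact Finset.sum_congr rfl fun t _ => by ring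


lemma hasFDerivAt_q (x θ : EuclideanSpace ℝ (Fin d)) :
    HasFDerivAt (fun θ' : EuclideanSpace ℝ (Fin d) => ‖θ' - x‖ ^ 2 / 2)
      (innerSL ℝ (θ - x)) θ := by
  have h1 : HasFDerivAt (fun θ' : EuclideanSpace ℝ (Fin d) => θ' - x)
      (ContinuousLinearMap.id ℝ (EuclideanSpace ℝ (Fin d))) θ := (hasFDerivAt_id θ).sub_const x
  have h3 := h1.norm_sq.const_mul (1 / 2 : ℝ)
  have e : (fun y : EuclideanSpace ℝ (Fin d) => 1 / 2 * ‖y - x‖ ^ 2)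
      = fun y : EuclideanSpace ℝ (Fin d) => ‖y - x‖ ^ 2 / 2 := by
    funext y; ring
  rw [e] at h3
  refine h3.congr_fderiv ?_
  ext y
  simp [smul_smul]

lemma hasFDerivAt_integrand (x θ : EuclideanSpace ℝ (Fin d)) :
    HasFDerivAt (fun θ' : EuclideanSpace ℝ (Fin d) => cf φ x * Real.exp (‖θ' - x‖ ^ 2 / 2))
      ((cf φ x * Real.exp (‖θ - x‖ ^ 2 / 2)) • innerSL ℝ (θ - x)) θ := by
  have h4 := (hasFDerivAt_q x θ).exp.const_mul (cf φ x)
  simpa [smul_smul] using h4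

lemma sm_hasFDerivAt (hφ : Measurable φ)
    (hint : ∀ θ : EuclideanSpace ℝ (Fin d),
      Integrable (fun x => (φ x) ^ 2 * Real.exp (-⟪θ, x⟫) * stdGaussDensity d x))
    (θ0 : EuclideanSpace ℝ (Fin d)) :
    ∃ D : EuclideanSpace ℝ (Fin d) →L[ℝ] ℝ, HasFDerivAt (secondMoment d φ) D θ0 := by
  set M : ℝ := ‖θ0‖ + 1 with hMdef
  have hM1 : 1 ≤ M := by rw [hMdef]; linarith [norm_nonneg θ0]
  have hM0 : 0 ≤ M := by linarith
  have contq : ∀ θ : EuclideanSpace ℝ (Fin d),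
      Continuous (fun x : EuclideanSpace ℝ (Fin d) => Real.exp (‖θ - x‖ ^ 2 / 2)) := fun θ =>
    Real.continuous_exp.comp (((continuous_const.sub continuous_id).norm.pow 2).div_const 2)
  have key := hasFDerivAt_integral_of_dominated_of_fderiv_le
      (μ := (volume : Measure (EuclideanSpace ℝ (Fin d)))) (𝕜 := ℝ)
      (F := fun (θ : EuclideanSpace ℝ (Fin d)) x => cf φ x * Real.exp (‖θ - x‖ ^ 2 / 2))
      (F' := fun (θ : EuclideanSpace ℝ (Fin d)) x =>
        (cf φ x * Real.exp (‖θ - x‖ ^ 2 / 2)) • innerSL ℝ (θ - x))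
      (x₀ := θ0)
      (bound := fun x => Real.exp (M ^ 2 / 2 + M)
        * ((φ x) ^ 2 * stdGaussDensity d x * Real.exp ((M + 1) * ‖x‖)))
      (s := Metric.ball θ0 1) (Metric.ball_mem_nhds θ0 one_pos)
      (Filter.Eventually.of_forall fun θ =>
        ((cf_meas hφ).mul (contq θ).measurable).aestronglyMeasurable)
      (integrable_cf_exp hint θ0)
      (AEStronglyMeasurable.smul
        ((cf_meas hφ).mul (contq θ0).measurable).aestronglyMeasurable
        ((innerSL ℝ).continuous.comp (continuous_const.sub continuous_id)).aestronglyMeasurable)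
      (Filter.Eventually.of_forall fun x => ?_)
      ((integrable_weight hφ hint (K := M + 1) (by linarith)).const_mul _)
      (Filter.Eventually.of_forall fun x θ _ => hasFDerivAt_integrand x θ)
  · have hsm : secondMoment d φ
        = fun θ => ∫ x, cf φ x * Real.exp (‖θ - x‖ ^ 2 / 2) := funext sm_eq
    rw [hsm]
    exact ⟨_, key⟩
  · intro θ hθ
    show _ ≤ _
    have hθ1 : ‖θ - θ0‖ < 1 := by rwa [mem_ball_iff_norm] at hθ
    have hθn : ‖θ‖ ≤ M := by
      have := norm_sub_norm_le θ θ0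
      simp only [hMdef]
      linarith
    have hr : ‖θ - x‖ ≤ M + ‖x‖ := (norm_sub_le θ x).trans (by linarith)
    have hrn : (0:ℝ) ≤ ‖θ - x‖ := norm_nonneg _
    have hxn : (0:ℝ) ≤ ‖x‖ := norm_nonneg _
    rw [norm_smul (cf φ x * Real.exp (‖θ - x‖ ^ 2 / 2)) (innerSL ℝ (θ - x)),
      innerSL_apply_norm, Real.norm_eq_abs,
      abs_of_nonneg (mul_nonneg (cf_nonneg x) (Real.exp_pos _).le)]
    have h5 : Real.exp (‖θ - x‖ ^ 2 / 2) * ‖θ - x‖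
        ≤ Real.exp ((M + ‖x‖) ^ 2 / 2) * (M + ‖x‖) :=
      mul_le_mul (Real.exp_le_exp.2 (by nlinarith)) hr hrn (Real.exp_pos _).le
    have h6 : M + ‖x‖ ≤ Real.exp (M + ‖x‖) := by
      linarith [Real.add_one_le_exp (M + ‖x‖)]
    have hkey : cf φ x * (Real.exp ((M + ‖x‖) ^ 2 / 2) * Real.exp (M + ‖x‖))
        = Real.exp (M ^ 2 / 2 + M)
          * ((φ x) ^ 2 * stdGaussDensity d x * Real.exp ((M + 1) * ‖x‖)) := by
      have e1 : Real.exp (-‖x‖ ^ 2 / 2)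
            * (Real.exp ((M + ‖x‖) ^ 2 / 2) * Real.exp (M + ‖x‖))
          = Real.exp (M ^ 2 / 2 + M) * Real.exp ((M + 1) * ‖x‖) := by
        rw [← Real.exp_add, ← Real.exp_add, ← Real.exp_add]
        congr 1
        ring
      unfold cf
      linear_combination ((φ x) ^ 2 * stdGaussDensity d x) * e1
    calc cf φ x * Real.exp (‖θ - x‖ ^ 2 / 2) * ‖θ - x‖
        = cf φ x * (Real.exp (‖θ - x‖ ^ 2 / 2) * ‖θ - x‖) := by ring
      _ ≤ cf φ x * (Real.exp ((M + ‖x‖) ^ 2 / 2) * (M + ‖x‖)) :=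
          mul_le_mul_of_nonneg_left h5 (cf_nonneg x)
      _ ≤ cf φ x * (Real.exp ((M + ‖x‖) ^ 2 / 2) * Real.exp (M + ‖x‖)) :=
          mul_le_mul_of_nonneg_left
            (mul_le_mul_of_nonneg_left h6 (Real.exp_pos _).le) (cf_nonneg x)
      _ = _ := hkey


lemma meas_S (hφ : Measurable φ) : MeasurableSet {x : EuclideanSpace ℝ (Fin d) | φ x ≠ 0} := by
  have : {x : EuclideanSpace ℝ (Fin d) | φ x ≠ 0} = φ ⁻¹' ({0}ᶜ) := rfl
  rw [this]
  exact hφ (measurableSet_singleton 0).compl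

lemma volume_S_pos (hpos : 0 < ∫ x in {x | φ x ≠ 0}, stdGaussDensity d x) :
    0 < volume {x : EuclideanSpace ℝ (Fin d) | φ x ≠ 0} := by
  rcases eq_zero_or_pos (volume {x : EuclideanSpace ℝ (Fin d) | φ x ≠ 0}) with h | h
  · rw [Measure.restrict_eq_zero.2 h, integral_zero_measure] at hpos
    exact absurd hpos (lt_irrefl 0)
  · exact h

lemma min_of_deriv_zero (hconv : ConvexOn ℝ Set.univ (secondMoment d φ))
    {θs : EuclideanSpace ℝ (Fin d)}
    (hD : HasFDerivAt (secondMoment d φ) (0 : EuclideanSpace ℝ (Fin d) →L[ℝ] ℝ) θs)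
    (θ : EuclideanSpace ℝ (Fin d)) : secondMoment d φ θs ≤ secondMoment d φ θ := by
  set u := θ - θs with hu
  have hcurve : HasDerivAt (fun t : ℝ => θs + t • u) u 0 := by
    simpa using ((hasDerivAt_id (0 : ℝ)).smul_const u).const_add θs
  have hD' : HasFDerivAt (secondMoment d φ) (0 : EuclideanSpace ℝ (Fin d) →L[ℝ] ℝ)
      (θs + (0 : ℝ) • u) := by simpa using hD
  have hg : HasDerivAt (fun t : ℝ => secondMoment d φ (θs + t • u)) 0 0 := by
    have h := hD'.comp_hasDerivAt 0 hcurve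
    simp only [ContinuousLinearMap.zero_apply] at h
    exact h
  have key : Filter.Tendsto (slope (fun t : ℝ => secondMoment d φ (θs + t • u)) 0)
      (nhdsWithin 0 (Set.Ioi 0)) (nhds 0) :=
    (hasDerivAt_iff_tendsto_slope.1 hg).mono_left
      (nhdsWithin_mono 0 fun t ht => ne_of_gt ht)
  have hle : ∀ᶠ t in nhdsWithin (0:ℝ) (Set.Ioi 0),
      slope (fun t : ℝ => secondMoment d φ (θs + t • u)) 0 t
        ≤ secondMoment d φ θ - secondMoment d φ θs := by
    filter_upwards [Ioo_mem_nhdsGT_of_mem (Set.left_mem_Ico.2 one_pos)] with t ht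
    have h1 : θs + t • u = (1 - t) • θs + t • θ := by rw [hu]; module
    have h2 := hconv.2 (Set.mem_univ θs) (Set.mem_univ θ)
      (by linarith [ht.2] : (0:ℝ) ≤ 1 - t) (le_of_lt ht.1) (by ring)
    rw [← h1] at h2
    simp only [smul_eq_mul] at h2
    rw [slope_def_field]
    simp only [zero_smul, add_zero, sub_zero]
    rw [div_le_iff₀ ht.1]
    nlinarith [h2]
  have := le_of_tendsto key hle
  linarith

lemma strict_mid (hφ : Measurable φ)
    (hint : ∀ θ : EuclideanSpace ℝ (Fin d),
      Integrable (fun x => (φ x) ^ 2 * Real.exp (-⟪θ, x⟫) * stdGaussDensity d x))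
    (hS : 0 < volume {x : EuclideanSpace ℝ (Fin d) | φ x ≠ 0})
    {a b : EuclideanSpace ℝ (Fin d)} (hab : a ≠ b) :
    secondMoment d φ ((1/2 : ℝ) • a + (1/2 : ℝ) • b)
      < (1/2) * secondMoment d φ a + (1/2) * secondMoment d φ b := by
  set m : EuclideanSpace ℝ (Fin d) := (1/2 : ℝ) • a + (1/2 : ℝ) • b with hm
  set f : EuclideanSpace ℝ (Fin d) → ℝ := fun x => cf φ x * Real.exp (‖m - x‖ ^ 2 / 2) with hf
  set h : EuclideanSpace ℝ (Fin d) → ℝ := fun x =>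
    (1/2) * (cf φ x * Real.exp (‖a - x‖ ^ 2 / 2))
      + (1/2) * (cf φ x * Real.exp (‖b - x‖ ^ 2 / 2)) with hh
  have hint_f : Integrable f := integrable_cf_exp hint m
  have hint_h : Integrable h :=
    ((integrable_cf_exp hint a).const_mul _).add ((integrable_cf_exp hint b).const_mul _)
  have hle : ∀ x, f x ≤ h x := fun x => by
    have h1 := exp_comb a b x (by norm_num : (0:ℝ) ≤ 1/2) (by norm_num : (0:ℝ) ≤ 1/2)
      (by norm_num : (1:ℝ)/2 + 1/2 = 1)
    have h2 := mul_le_mul_of_nonneg_left h1 (cf_nonneg (φ := φ) x)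
    rw [hf, hh]
    dsimp only
    rw [← hm] at h2
    nlinarith [h2]
  have hlt : ∀ x, φ x ≠ 0 → f x < h x := fun x hx => by
    have hcf := cf_pos (φ := φ) hx
    have hq : ‖m - x‖ ^ 2 / 2
        = ((1/2) * (‖a - x‖ ^ 2 / 2) + (1/2) * (‖b - x‖ ^ 2 / 2)) - ‖a - b‖ ^ 2 / 8 := by
      rw [hm, qid a b x (by norm_num : (1:ℝ)/2 + 1/2 = 1)]
      ring
    have habn : 0 < ‖a - b‖ ^ 2 / 8 := by
      have : a - b ≠ 0 := sub_ne_zero.2 hab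
      have := norm_pos_iff.2 this
      positivity
    have h3 : Real.exp (‖m - x‖ ^ 2 / 2)
        < Real.exp ((1/2) * (‖a - x‖ ^ 2 / 2) + (1/2) * (‖b - x‖ ^ 2 / 2)) := by
      rw [hq]
      exact Real.exp_lt_exp.2 (by linarith)
    have h4 : Real.exp ((1/2) * (‖a - x‖ ^ 2 / 2) + (1/2) * (‖b - x‖ ^ 2 / 2))
        ≤ (1/2) * Real.exp (‖a - x‖ ^ 2 / 2) + (1/2) * Real.exp (‖b - x‖ ^ 2 / 2) := by
      have := convexOn_exp.2 (Set.mem_univ (‖a - x‖ ^ 2 / 2)) (Set.mem_univ (‖b - x‖ ^ 2 / 2))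
        (by norm_num : (0:ℝ) ≤ 1/2) (by norm_num : (0:ℝ) ≤ 1/2) (by norm_num)
      simpa [smul_eq_mul] using this
    have h5 : Real.exp (‖m - x‖ ^ 2 / 2)
        < (1/2) * Real.exp (‖a - x‖ ^ 2 / 2) + (1/2) * Real.exp (‖b - x‖ ^ 2 / 2) :=
      lt_of_lt_of_le h3 h4
    rw [hf, hh]
    dsimp only
    nlinarith [h5, hcf]
  have hdiffpos : 0 < ∫ x, (h x - f x) := by
    rw [integral_pos_iff_support_of_nonneg
      (fun x => sub_nonneg.2 (hle x)) (hint_h.sub hint_f)]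
    refine lt_of_lt_of_le hS (measure_mono fun x hx => ?_)
    exact sub_ne_zero.2 (ne_of_gt (hlt x hx))
  rw [integral_sub hint_h hint_f] at hdiffpos
  have hfI : secondMoment d φ m = ∫ x, f x := sm_eq m
  have hhI : (∫ x, h x)
      = (1/2) * secondMoment d φ a + (1/2) * secondMoment d φ b := by
    rw [hh, integral_add ((integrable_cf_exp hint a).const_mul _)
      ((integrable_cf_exp hint b).const_mul _), integral_const_mul, integral_const_mul,
      sm_eq a, sm_eq b]
  rw [hfI]
  linarith [hdiffpos, hhI.symm.le, hhI.le]

lemma exists_min (hφ : Measurable φ)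
    (hint : ∀ θ : EuclideanSpace ℝ (Fin d),
      Integrable (fun x => (φ x) ^ 2 * Real.exp (-⟪θ, x⟫) * stdGaussDensity d x))
    (hS : 0 < volume {x : EuclideanSpace ℝ (Fin d) | φ x ≠ 0}) :
    ∃ θm : EuclideanSpace ℝ (Fin d), ∀ θ, secondMoment d φ θm ≤ secondMoment d φ θ := by
  have hconv := sm_convex hint
  have hcont : Continuous (secondMoment d φ) := by
    rw [← continuousOn_univ]
    exact hconv.continuousOn isOpen_univ
  obtain ⟨R, hR⟩ : ∃ R : ℕ,
      0 < volume ({x : EuclideanSpace ℝ (Fin d) | φ x ≠ 0} ∩ Metric.closedBall 0 R) := by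
    by_contra hcon
    push_neg at hcon
    have hsub : {x : EuclideanSpace ℝ (Fin d) | φ x ≠ 0}
        ⊆ ⋃ n : ℕ, ({x : EuclideanSpace ℝ (Fin d) | φ x ≠ 0} ∩ Metric.closedBall 0 n) := by
      intro x hx
      obtain ⟨n, hn⟩ := exists_nat_ge ‖x‖
      exact Set.mem_iUnion.2 ⟨n, hx, by simpa [Metric.mem_closedBall, dist_zero_right] using hn⟩
    have hnull : volume (⋃ n : ℕ,
        ({x : EuclideanSpace ℝ (Fin d) | φ x ≠ 0} ∩ Metric.closedBall 0 n)) = 0 :=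
      measure_iUnion_null fun n => le_antisymm (hcon n) zero_le
    exact absurd (le_antisymm ((measure_mono hsub).trans hnull.le) zero_le) hS.ne'
  set A : Set (EuclideanSpace ℝ (Fin d)) :=
    {x : EuclideanSpace ℝ (Fin d) | φ x ≠ 0} ∩ Metric.closedBall 0 R with hA
  have hAmeas : MeasurableSet A := (meas_S hφ).inter measurableSet_closedBall
  set ε : ℝ := ∫ x in A, cf φ x with hε
  have hεpos : 0 < ε := by
    rw [hε, setIntegral_pos_iff_support_of_nonneg_ae
      (Filter.Eventually.of_forall fun x => cf_nonneg x)
      ((integrable_cf hφ hint).integrableOn)]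
    refine lt_of_lt_of_le hR (measure_mono fun x hx => ?_)
    exact ⟨ne_of_gt (cf_pos hx.1), hx⟩
  have hcoer : ∀ θ : EuclideanSpace ℝ (Fin d), (R:ℝ) ≤ ‖θ‖ →
      Real.exp ((‖θ‖ - R) ^ 2 / 2) * ε ≤ secondMoment d φ θ := by
    intro θ hθ
    rw [sm_eq θ]
    have step1 : ∫ x in A, cf φ x * Real.exp (‖θ - x‖ ^ 2 / 2)
        ≤ ∫ x, cf φ x * Real.exp (‖θ - x‖ ^ 2 / 2) :=
      setIntegral_le_integral (integrable_cf_exp hint θ)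
        (Filter.Eventually.of_forall fun x =>
          mul_nonneg (cf_nonneg x) (Real.exp_pos _).le)
    have step2 : ∫ x in A, Real.exp ((‖θ‖ - R) ^ 2 / 2) * cf φ x
        ≤ ∫ x in A, cf φ x * Real.exp (‖θ - x‖ ^ 2 / 2) := by
      refine setIntegral_mono_on
        (((integrable_cf hφ hint).const_mul _).integrableOn)
        ((integrable_cf_exp hint θ).integrableOn) hAmeas (fun x hx => ?_)
      have hxR : ‖x‖ ≤ (R:ℝ) := by
        simpa [Metric.mem_closedBall, dist_zero_right] using hx.2
      have h1 : ‖θ‖ - R ≤ ‖θ - x‖ := by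
        have := norm_sub_norm_le θ x
        linarith
      have h2 : (‖θ‖ - R) ^ 2 ≤ ‖θ - x‖ ^ 2 :=
        sq_le_sq' (by linarith [norm_nonneg (θ - x)]) h1
      have h3 : Real.exp ((‖θ‖ - R) ^ 2 / 2) ≤ Real.exp (‖θ - x‖ ^ 2 / 2) :=
        Real.exp_le_exp.2 (by linarith)
      calc Real.exp ((‖θ‖ - R) ^ 2 / 2) * cf φ x
          ≤ Real.exp (‖θ - x‖ ^ 2 / 2) * cf φ x :=
            mul_le_mul_of_nonneg_right h3 (cf_nonneg x)
        _ = cf φ x * Real.exp (‖θ - x‖ ^ 2 / 2) := by ring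
    have step3 : ∫ x in A, Real.exp ((‖θ‖ - R) ^ 2 / 2) * cf φ x
        = Real.exp ((‖θ‖ - R) ^ 2 / 2) * ε := by
      rw [hε, integral_const_mul]
    linarith [step1, step2, step3.symm.le, step3.le]
  have htendR : Filter.Tendsto (fun r : ℝ => Real.exp ((r - R) ^ 2 / 2) * ε)
      Filter.atTop Filter.atTop := by
    apply Filter.Tendsto.atTop_mul_const hεpos
    apply Real.tendsto_exp_atTop.comp
    apply Filter.Tendsto.atTop_div_const two_pos
    apply (Filter.tendsto_pow_atTop (two_ne_zero)).comp
    simpa [sub_eq_add_neg] using Filter.tendsto_atTop_add_const_right Filter.atTop (-(R:ℝ)) Filter.tendsto_id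
  have htend : Filter.Tendsto (secondMoment d φ)
      (Filter.cocompact (EuclideanSpace ℝ (Fin d))) Filter.atTop := by
    refine Filter.tendsto_atTop_mono' _ ?_ (htendR.comp tendsto_norm_cocompact_atTop)
    filter_upwards [tendsto_norm_cocompact_atTop.eventually_ge_atTop (R:ℝ)] with θ hθ
    exact hcoer θ hθ
  exact hcont.exists_forall_le htend

end Stmt5Aux

/-- There exists a unique minimizer `θ*` of `v`, and minimizers are exactly the
critical points `∇v(θ) = 0`. -/
theorem stmt_5 {d : ℕ} (φ : EuclideanSpace ℝ (Fin d) → ℝ) (hφ : Measurable φ)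
    (hint : ∀ θ : EuclideanSpace ℝ (Fin d),
      Integrable (fun x => (φ x) ^ 2 * Real.exp (-⟪θ, x⟫) * stdGaussDensity d x))
    (hpos : 0 < ∫ x in {x | φ x ≠ 0}, stdGaussDensity d x) :
    (∃! θstar : EuclideanSpace ℝ (Fin d), ∀ θ, secondMoment d φ θstar ≤ secondMoment d φ θ) ∧
      ∀ θstar : EuclideanSpace ℝ (Fin d),
        ((∀ θ, secondMoment d φ θstar ≤ secondMoment d φ θ) ↔
          gradient (secondMoment d φ) θstar = 0) := by
  have hS := volume_S_pos (φ := φ) hpos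
  have hconv := sm_convex hint
  obtain ⟨θm, hθm⟩ := exists_min hφ hint hS
  have uniq : ∀ a b : EuclideanSpace ℝ (Fin d),
      (∀ θ, secondMoment d φ a ≤ secondMoment d φ θ) →
      (∀ θ, secondMoment d φ b ≤ secondMoment d φ θ) → a = b := by
    intro a b ha hb
    by_contra hab
    have h1 := strict_mid hφ hint hS hab
    have h2 := ha ((1/2 : ℝ) • a + (1/2 : ℝ) • b)
    have h3 := hb a
    have h4 := ha b
    linarith
  refine ⟨⟨θm, hθm, fun y hy => uniq y θm hy hθm⟩,
    fun θs => ⟨fun hmin => ?_, fun hgrad θ => ?_⟩⟩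
  · have hloc : IsLocalMin (secondMoment d φ) θs :=
      Filter.Eventually.of_forall fun θ => hmin θ
    have h0 := hloc.fderiv_eq_zero
    simp [gradient, h0]
  · obtain ⟨D, hD⟩ := sm_hasFDerivAt hφ hint θs
    have hfd : fderiv ℝ (secondMoment d φ) θs = D := hD.fderiv
    have h0 : fderiv ℝ (secondMoment d φ) θs = 0 := by
      have h1 : (InnerProductSpace.toDual ℝ (EuclideanSpace ℝ (Fin d)))
          (gradient (secondMoment d φ) θs) = fderiv ℝ (secondMoment d φ) θs := by
        simp [gradient]
      rw [hgrad, map_zero] at h1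
      exact h1.symm
    have hD0 : D = 0 := hfd.symm.trans h0
    exact min_of_deriv_zero hconv (hD0 ▸ hD) θ
end

section
/- Let Y₁, ..., Yₙ be i.i.d. copies of an integrable real random variable Y with p := P(Y > γ) ∈ (0,1). Define Tₙ = Σᵢ 1{Yᵢ > γ} and the estimator Cₙ = (1/Tₙ) Σᵢ Yᵢ 1{Yᵢ > γ} on the event {Tₙ ≥ 1} (and Cₙ = 0 on {Tₙ = 0}). Then E[Cₙ] = E[Y | Y > γ] (1 - (1-p)ⁿ); equivalently, the bias of Cₙ as an estimator of E[Y | Y > γ] equals -E[Y | Y > γ](1-p)ⁿ. -/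
open MeasureTheory ProbabilityTheory Finset

lemma aux_integrable_of_bdd {Omega : Type*} [MeasurableSpace Omega] {mu : Measure Omega}
    [IsProbabilityMeasure mu] {f : Omega → ℝ} {D : ℝ} (hf : Measurable f)
    (hb : ∀ w, |f w| ≤ D) : Integrable f mu :=
  (integrable_const D).mono' hf.aestronglyMeasurable (Filter.Eventually.of_forall hb)

lemma aux_binom_exp {Omega : Type*} [MeasurableSpace Omega] (mu : Measure Omega)
    [IsProbabilityMeasure mu]
    (B : ℕ → Omega → ℝ) (hBmeas : ∀ i, Measurable (B i))
    (hBindep : iIndepFun B mu)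
    (hB01 : ∀ i w, B i w = 0 ∨ B i w = 1)
    (p : ℝ) (hEB : ∀ i, ∫ w, B i w ∂mu = p)
    (s : Finset ℕ) :
    ∀ (φ : ℝ → ℝ), Measurable φ → (∃ C, ∀ x, |φ x| ≤ C) →
      ∫ w, φ (∑ j ∈ s, B j w) ∂mu =
        ∑ k ∈ Finset.range (s.card + 1),
          (s.card.choose k : ℝ) * p ^ k * (1 - p) ^ (s.card - k) * φ k := by
  classical
  induction s using Finset.induction_on with
  | empty => intro φ hφ _; simp
  | @insert i s hi IH =>
    intro φ hφ hbdd
    obtain ⟨C, hC⟩ := hbdd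
    have hC0 : 0 ≤ C := le_trans (abs_nonneg _) (hC 0)
    set c := s.card with hc
    have hScard : (insert i s).card = c + 1 := Finset.card_insert_of_notMem hi
    set S : Omega → ℝ := fun w => ∑ j ∈ s, B j w with hS
    have hSmeas : Measurable S := Finset.measurable_sum _ fun j _ => hBmeas j
    have hpt : ∀ w, φ (∑ j ∈ insert i s, B j w)
        = (1 - B i w) * φ (S w) + B i w * φ (S w + 1) := by
      intro w
      rw [Finset.sum_insert hi]
      rcases hB01 i w with h | h <;> simp [h, add_comm, hS]
    have hIndep : IndepFun S (B i) mu := by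
      have h1 := hBindep.indepFun_finset_sum_of_notMem hBmeas hi
      have he : (∑ j ∈ s, B j) = S := by funext w; simp [hS]
      rwa [he] at h1
    have hBbdd : ∀ w, |B i w| ≤ 1 := by
      intro w; rcases hB01 i w with h | h <;> simp [h]
    have hint1 : Integrable (fun w => (1 - B i w) * φ (S w)) mu := by
      apply aux_integrable_of_bdd (D := 2 * C)
        ((measurable_const.sub (hBmeas i)).mul (hφ.comp hSmeas))
      intro w
      have h1 : |1 - B i w| ≤ 2 := by
        rcases hB01 i w with h | h <;> simp [h] <;> norm_num
      calc |(1 - B i w) * φ (S w)| = |1 - B i w| * |φ (S w)| := abs_mul _ _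
        _ ≤ 2 * C := mul_le_mul h1 (hC _) (abs_nonneg _) (by norm_num)
    have hint2 : Integrable (fun w => B i w * φ (S w + 1)) mu := by
      apply aux_integrable_of_bdd (D := 1 * C)
        ((hBmeas i).mul (hφ.comp (hSmeas.add measurable_const)))
      intro w
      calc |B i w * φ (S w + 1)| = |B i w| * |φ (S w + 1)| := abs_mul _ _
        _ ≤ 1 * C := mul_le_mul (hBbdd w) (hC _) (abs_nonneg _) (by norm_num)
    have hmul1 : ∫ w, (1 - B i w) * φ (S w) ∂mu = (1 - p) * ∫ w, φ (S w) ∂mu := by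
      have hi1 : IndepFun (fun w => 1 - B i w) (fun w => φ (S w)) mu :=
        hIndep.symm.comp (measurable_const.sub measurable_id) hφ
      rw [hi1.integral_fun_mul_eq_mul_integral ((measurable_const.sub (hBmeas i)).aestronglyMeasurable)
        ((hφ.comp hSmeas).aestronglyMeasurable)]
      congr 1
      rw [integral_sub (integrable_const 1) (aux_integrable_of_bdd (hBmeas i) hBbdd)]
      simp [hEB i]
    have hmul2 : ∫ w, B i w * φ (S w + 1) ∂mu = p * ∫ w, φ (S w + 1) ∂mu := by
      have hi1 : IndepFun (B i) (fun w => φ (S w + 1)) mu :=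
        hIndep.symm.comp measurable_id (hφ.comp (measurable_id.add measurable_const))
      rw [hi1.integral_fun_mul_eq_mul_integral ((hBmeas i).aestronglyMeasurable)
        ((hφ.comp (hSmeas.add measurable_const)).aestronglyMeasurable)]
      rw [hEB i]
    have e1 : ∫ w, φ (S w) ∂mu
        = ∑ k ∈ Finset.range (c + 1), (c.choose k : ℝ) * p ^ k * (1 - p) ^ (c - k) * φ k :=
      IH φ hφ ⟨C, hC⟩
    have e2 : ∫ w, φ (S w + 1) ∂mu
        = ∑ k ∈ Finset.range (c + 1), (c.choose k : ℝ) * p ^ k * (1 - p) ^ (c - k) * φ (k + 1) := by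
      have h2 := IH (fun x => φ (x + 1)) (hφ.comp (measurable_id.add measurable_const))
        ⟨C, fun x => hC _⟩
      simpa using h2
    calc ∫ w, φ (∑ j ∈ insert i s, B j w) ∂mu
        = ∫ w, ((1 - B i w) * φ (S w) + B i w * φ (S w + 1)) ∂mu :=
          integral_congr_ae (Filter.Eventually.of_forall hpt)
      _ = (1 - p) * ∫ w, φ (S w) ∂mu + p * ∫ w, φ (S w + 1) ∂mu := by
          rw [integral_add hint1 hint2, hmul1, hmul2]
      _ = ∑ k ∈ Finset.range ((insert i s).card + 1),
            ((insert i s).card.choose k : ℝ) * p ^ k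
              * (1 - p) ^ ((insert i s).card - k) * φ k := by
          rw [e1, e2, hScard]
          rw [Finset.sum_range_succ'
            (fun k => ((c+1).choose k : ℝ) * p ^ k * (1 - p) ^ (c + 1 - k) * φ k) (c+1)]
          rw [Finset.mul_sum, Finset.mul_sum]
          rw [Finset.sum_range_succ'
            (fun k => (1-p) * ((c.choose k : ℝ) * p ^ k * (1 - p) ^ (c - k) * φ k)) c]
          push_cast
          have pascal : ∀ k ∈ Finset.range (c + 1),
              ((c+1).choose (k+1) : ℝ) * p ^ (k+1) * (1 - p) ^ (c - k) * φ (k+1)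
              = (c.choose k : ℝ) * p ^ (k+1) * (1 - p) ^ (c - k) * φ (k+1)
                + (c.choose (k+1) : ℝ) * p ^ (k+1) * (1 - p) ^ (c - k) * φ (k+1) := by
            intro k hk
            rw [Nat.choose_succ_succ]
            push_cast
            ring
          rw [Finset.sum_congr rfl pascal, Finset.sum_add_distrib]
          have eA : ∑ k ∈ Finset.range (c + 1),
                p * ((c.choose k : ℝ) * p ^ k * (1 - p) ^ (c - k) * φ (k+1))
              = ∑ k ∈ Finset.range (c + 1),
                (c.choose k : ℝ) * p ^ (k+1) * (1 - p) ^ (c - k) * φ (k+1) :=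
            Finset.sum_congr rfl (fun k _ => by ring)
          have eB : ∑ k ∈ Finset.range c,
                (1-p) * ((c.choose (k+1) : ℝ) * p ^ (k+1) * (1 - p) ^ (c - (k+1)) * φ (k+1))
              = ∑ k ∈ Finset.range (c+1),
                (c.choose (k+1) : ℝ) * p ^ (k+1) * (1 - p) ^ (c - k) * φ (k+1) := by
            rw [Finset.sum_range_succ, Nat.choose_succ_self]
            simp only [Nat.cast_zero, zero_mul, add_zero]
            refine Finset.sum_congr rfl (fun k hk => ?_)
            have hk1 : (1-p) ^ (c - k) = (1-p) * (1-p) ^ (c - (k+1)) := by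
              rw [← pow_succ']
              congr 1
              have := Finset.mem_range.mp hk
              omega
            rw [hk1]; ring
          rw [eA, ← eB]
          push_cast
          simp only [Nat.sub_zero, Nat.choose_zero_right]
          push_cast
          ring

/-- Bias of the empirical conditional-mean (CVaR with `θ = 0`) estimator:
for i.i.d. `Y₁, ..., Yₙ` with `p = P(Y > γ) ∈ (0,1)`,
`E[Cₙ] = E[Y | Y > γ](1 - (1-p)ⁿ)` where `Cₙ` is the mean of the samples
exceeding `γ` (set to `0` when no sample exceeds `γ`). -/
theorem stmt_12 {Ω : Type*} [MeasurableSpace Ω] (μ : Measure Ω) [IsProbabilityMeasure μ]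
    (Y : ℕ → Ω → ℝ) (hmeas : ∀ i, Measurable (Y i))
    (hindep : iIndepFun Y μ)
    (hident : ∀ i, IdentDistrib (Y i) (Y 0) μ μ)
    (hint : Integrable (Y 0) μ) (γ : ℝ) (n : ℕ)
    (hp0 : 0 < (μ {ω | γ < Y 0 ω}).toReal) (hp1 : (μ {ω | γ < Y 0 ω}).toReal < 1) :
    ∫ ω, (if (∑ i ∈ Finset.range n, if γ < Y i ω then 1 else 0 : ℕ) = 0 then (0 : ℝ)
        else (∑ i ∈ Finset.range n, if γ < Y i ω then Y i ω else 0) /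
          (∑ i ∈ Finset.range n, if γ < Y i ω then (1 : ℝ) else 0)) ∂μ =
      ((∫ ω in {ω | γ < Y 0 ω}, Y 0 ω ∂μ) / (μ {ω | γ < Y 0 ω}).toReal) *
        (1 - (1 - (μ {ω | γ < Y 0 ω}).toReal) ^ n) := by
  classical
  rcases Nat.eq_zero_or_pos n with hn | hn
  · subst hn; simp
  set s0 : Set Ω := {ω | γ < Y 0 ω} with hs0
  set p : ℝ := (μ s0).toReal with hp
  set m : ℝ := ∫ ω in s0, Y 0 ω ∂μ with hm
  have hpne : p ≠ 0 := ne_of_gt hp0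
  -- basic measurable functions
  set φind : ℝ → ℝ := fun y => if γ < y then 1 else 0 with hφind_def
  set φval : ℝ → ℝ := fun y => if γ < y then y else 0 with hφval_def
  have hφind : Measurable φind := by
    apply Measurable.ite _ measurable_const measurable_const
    exact measurableSet_Ioi
  have hφval : Measurable φval := by
    apply Measurable.ite _ measurable_id measurable_const
    exact measurableSet_Ioi
  set B : ℕ → Ω → ℝ := fun j ω => if γ < Y j ω then 1 else 0 with hB_def
  set num : ℕ → Ω → ℝ := fun j ω => if γ < Y j ω then Y j ω else 0 with hnum_def
  have hBeq : B = fun j => φind ∘ Y j := rfl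
  have hnumeq : num = fun j => φval ∘ Y j := rfl
  have hBmeas : ∀ j, Measurable (B j) := fun j => hφind.comp (hmeas j)
  have hnummeas : ∀ j, Measurable (num j) := fun j => hφval.comp (hmeas j)
  have hBindep : iIndepFun B μ := by
    rw [hBeq]; exact hindep.comp _ (fun _ => hφind)
  have hB01 : ∀ j ω, B j ω = 0 ∨ B j ω = 1 := by
    intro j ω
    by_cases h : γ < Y j ω
    · right; simp [hB_def, h]
    · left; simp [hB_def, h]
  have hsmeas : MeasurableSet s0 := measurableSet_lt measurable_const (hmeas 0)
  -- expectation of indicator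
  have hEB : ∀ j, ∫ ω, B j ω ∂μ = p := by
    intro j
    have idB : IdentDistrib (B j) (B 0) μ μ := by
      rw [hBeq]; exact (hident j).comp hφind
    rw [idB.integral_eq]
    have h1 : B 0 = s0.indicator (fun _ => (1 : ℝ)) := by
      funext ω
      simp [hB_def, Set.indicator_apply, hs0, Set.mem_setOf_eq]
    rw [h1, integral_indicator hsmeas]
    simp [hp]; rfl
  -- integrability of num
  have hNum0 : Integrable (num 0) μ := by
    apply Integrable.mono hint (hnummeas 0).aestronglyMeasurable
    apply Filter.Eventually.of_forall
    intro ω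
    simp only [hnum_def, Real.norm_eq_abs]
    split_ifs
    · exact le_refl _
    · simpa using abs_nonneg (Y 0 ω)
  have hNumInt : ∀ j, Integrable (num j) μ := by
    intro j
    have idn : IdentDistrib (num j) (num 0) μ μ := by
      rw [hnumeq]; exact (hident j).comp hφval
    exact idn.integrable_iff.mpr hNum0
  have hm0 : ∫ ω, num 0 ω ∂μ = m := by
    have h1 : num 0 = s0.indicator (Y 0) := by
      funext ω
      simp [hnum_def, Set.indicator_apply, hs0, Set.mem_setOf_eq]
    rw [h1, integral_indicator hsmeas]
  have hNumEq : ∀ j, ∫ ω, num j ω ∂μ = m := by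
    intro j
    have idn : IdentDistrib (num j) (num 0) μ μ := by
      rw [hnumeq]; exact (hident j).comp hφval
    rw [idn.integral_eq, hm0]
  -- the function G
  set G : ℝ → ℝ := fun x => if x < 0 then 0 else (1 + x)⁻¹ with hG_def
  have hG : Measurable G := by
    apply Measurable.ite _ measurable_const
    · exact (measurable_const.add measurable_id).inv
    · exact measurableSet_Iio
  have hGbdd : ∀ x, |G x| ≤ 1 := by
    intro x
    rcases lt_or_ge x 0 with h | h
    · simp [hG_def, h]
    · have h0 : ¬ x < 0 := not_lt.mpr h
      simp only [hG_def, if_neg h0]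
      have h1 : (0 : ℝ) < 1 + x := by linarith
      rw [abs_of_nonneg (inv_nonneg.mpr h1.le)]
      rw [inv_le_one_iff₀]
      right; linarith
  -- pointwise rewriting of the integrand
  have key : ∀ ω, (if (∑ i ∈ Finset.range n, if γ < Y i ω then 1 else 0 : ℕ) = 0 then (0 : ℝ)
        else (∑ i ∈ Finset.range n, if γ < Y i ω then Y i ω else 0) /
          (∑ i ∈ Finset.range n, if γ < Y i ω then (1 : ℝ) else 0))
      = ∑ i ∈ Finset.range n, num i ω * G (∑ j ∈ (Finset.range n).erase i, B j ω) := by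
    intro ω
    by_cases hT : (∑ i ∈ Finset.range n, if γ < Y i ω then 1 else 0 : ℕ) = 0
    · rw [if_pos hT]
      symm
      apply Finset.sum_eq_zero
      intro i hiR
      have h2 : ¬ γ < Y i ω := by
        intro h
        have h3 := (Finset.sum_eq_zero_iff.mp hT) i hiR
        rw [if_pos h] at h3
        exact one_ne_zero h3
      simp [hnum_def, h2]
    · rw [if_neg hT, Finset.sum_div]
      apply Finset.sum_congr rfl
      intro i hiR
      by_cases hYi : γ < Y i ω
      · have hBi : B i ω = 1 := by simp [hB_def, hYi]
        have hsplit : (∑ j ∈ Finset.range n, B j ω)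
            = B i ω + ∑ j ∈ (Finset.range n).erase i, B j ω :=
          (Finset.add_sum_erase _ _ hiR).symm
        have hSnn : 0 ≤ ∑ j ∈ (Finset.range n).erase i, B j ω := by
          apply Finset.sum_nonneg
          intro j _
          rcases hB01 j ω with h | h <;> simp [h]
        have hGval : G (∑ j ∈ (Finset.range n).erase i, B j ω)
            = (1 + ∑ j ∈ (Finset.range n).erase i, B j ω)⁻¹ := by
          rw [hG_def]
          simp [not_lt.mpr hSnn]
        have hden : (∑ j ∈ Finset.range n, if γ < Y j ω then (1:ℝ) else 0)
            = 1 + ∑ j ∈ (Finset.range n).erase i, B j ω := by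
          rw [show (∑ j ∈ Finset.range n, if γ < Y j ω then (1:ℝ) else 0)
              = ∑ j ∈ Finset.range n, B j ω from rfl, hsplit, hBi]
        rw [hden, hGval]
        rw [div_eq_mul_inv]
      · have h1 : (if γ < Y i ω then Y i ω else 0) = 0 := by simp [hYi]
        have h2 : num i ω = 0 := by simp [hnum_def, hYi]
        rw [h1, h2, zero_div, zero_mul]
  -- integrability of summands
  have hintsummand : ∀ i, Integrable
      (fun ω => num i ω * G (∑ j ∈ (Finset.range n).erase i, B j ω)) μ := by
    intro i
    have hSm : Measurable (fun ω => ∑ j ∈ (Finset.range n).erase i, B j ω) :=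
      Finset.measurable_sum _ fun j _ => hBmeas j
    apply Integrable.mono (hNumInt i) ((hnummeas i).mul (hG.comp hSm)).aestronglyMeasurable
    apply Filter.Eventually.of_forall
    intro ω
    simp only [Real.norm_eq_abs, Pi.mul_apply, Function.comp_apply, abs_mul]
    calc |num i ω| * |G (∑ j ∈ (Finset.range n).erase i, B j ω)|
        ≤ |num i ω| * 1 := by
          apply mul_le_mul_of_nonneg_left (hGbdd _) (abs_nonneg _)
      _ = |num i ω| := mul_one _
  -- compute each summand's integral
  have hsummand : ∀ i ∈ Finset.range n,
      ∫ ω, num i ω * G (∑ j ∈ (Finset.range n).erase i, B j ω) ∂μ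
        = m * ∑ k ∈ Finset.range n,
            (((n-1).choose k : ℝ)) * p ^ k * (1 - p) ^ (n - 1 - k) * G k := by
    intro i hiR
    -- independence
    set g : ℕ → ℝ → ℝ := fun j => if j = i then φval else φind with hg_def
    have hgmeas : ∀ j, Measurable (g j) := by
      intro j
      by_cases hj : j = i
      · simp only [hg_def, if_pos hj]; exact hφval
      · simp only [hg_def, if_neg hj]; exact hφind
    set W : ℕ → Ω → ℝ := fun j => g j ∘ Y j with hW_def
    have hWindep : iIndepFun W μ := hindep.comp g hgmeas
    have hWmeas : ∀ j, Measurable (W j) := fun j => (hgmeas j).comp (hmeas j)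
    have hni : i ∉ (Finset.range n).erase i := Finset.notMem_erase i _
    have hW0 := hWindep.indepFun_finset_sum_of_notMem hWmeas hni
    have hWsum : (∑ j ∈ (Finset.range n).erase i, W j)
        = fun ω => ∑ j ∈ (Finset.range n).erase i, B j ω := by
      funext ω
      rw [Finset.sum_apply]
      apply Finset.sum_congr rfl
      intro j hj
      have hji : j ≠ i := Finset.ne_of_mem_erase hj
      simp [hW_def, hg_def, hji, hB_def, hφind_def]
    have hWi : W i = num i := by
      funext ω
      simp [hW_def, hg_def, hnum_def, hφval_def]
    rw [hWsum, hWi] at hW0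
    have hIndep2 : IndepFun
        (fun ω => G (∑ j ∈ (Finset.range n).erase i, B j ω)) (num i) μ :=
      hW0.comp hG measurable_id
    have hSm : Measurable (fun ω => ∑ j ∈ (Finset.range n).erase i, B j ω) :=
      Finset.measurable_sum _ fun j _ => hBmeas j
    rw [hIndep2.symm.integral_fun_mul_eq_mul_integral ((hnummeas i).aestronglyMeasurable)
      ((hG.comp hSm).aestronglyMeasurable)]
    rw [hNumEq i]
    congr 1
    have hcard : ((Finset.range n).erase i).card = n - 1 := by
      rw [Finset.card_erase_of_mem hiR, Finset.card_range]
    have hbinom := aux_binom_exp μ B hBmeas hBindep hB01 p hEB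
      ((Finset.range n).erase i) G hG ⟨1, hGbdd⟩
    rw [hcard] at hbinom
    rw [hbinom]
    have : n - 1 + 1 = n := Nat.succ_pred_eq_of_pos hn
    rw [this]
  -- put everything together
  rw [integral_congr_ae (Filter.Eventually.of_forall key)]
  rw [integral_finset_sum _ (fun i _ => hintsummand i)]
  rw [Finset.sum_congr rfl hsummand]
  rw [Finset.sum_const, Finset.card_range, nsmul_eq_mul]
  -- final algebra
  set c0 : ℝ := ∑ k ∈ Finset.range n,
      (((n-1).choose k : ℝ)) * p ^ k * (1 - p) ^ (n - 1 - k) * G k with hc0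
  have hGk : ∀ k : ℕ, G (k : ℝ) = ((k : ℝ) + 1)⁻¹ := by
    intro k
    have h0 : ¬ (k : ℝ) < 0 := not_lt.mpr (by positivity)
    simp only [hG_def, if_neg h0]
    rw [add_comm]
  have hkey : p * ((n : ℝ) * c0) = 1 - (1 - p) ^ n := by
    have step1 : p * ((n : ℝ) * c0)
        = ∑ k ∈ Finset.range n, (n.choose (k+1) : ℝ) * p ^ (k+1) * (1-p) ^ (n - (k+1)) := by
      rw [hc0, Finset.mul_sum, Finset.mul_sum]
      apply Finset.sum_congr rfl
      intro k _
      have hchoose : (n : ℝ) * ((n-1).choose k : ℝ) = (n.choose (k+1) : ℝ) * ((k : ℝ) + 1) := by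
        have h5 := Nat.add_one_mul_choose_eq (n-1) k
        have h4 : n - 1 + 1 = n := by omega
        rw [h4] at h5
        exact_mod_cast h5
      have hsub : n - 1 - k = n - (k + 1) := by omega
      rw [hGk k, hsub]
      have hk1 : ((k : ℝ) + 1) ≠ 0 := by positivity
      rw [show p * ((n:ℝ) * ((((n-1).choose k : ℕ) : ℝ) * p ^ k * (1 - p) ^ (n - (k+1))
          * ((k:ℝ)+1)⁻¹))
        = ((n:ℝ) * (((n-1).choose k : ℕ) : ℝ)) * ((k:ℝ)+1)⁻¹
          * (p ^ (k+1) * (1-p) ^ (n-(k+1))) from by ring, hchoose]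
      field_simp
    rw [step1]
    have hbin := add_pow p (1 - p) n
    rw [show p + (1 - p) = 1 by ring, one_pow] at hbin
    rw [Finset.sum_range_succ'
      (fun k => p ^ k * (1-p) ^ (n - k) * (n.choose k : ℝ)) n] at hbin
    simp only [pow_zero, Nat.choose_zero_right, Nat.cast_one, one_mul, mul_one,
      Nat.sub_zero] at hbin
    have : ∑ k ∈ Finset.range n, (n.choose (k+1) : ℝ) * p ^ (k+1) * (1-p) ^ (n - (k+1))
        = ∑ k ∈ Finset.range n, p ^ (k+1) * (1-p) ^ (n - (k+1)) * (n.choose (k+1) : ℝ) :=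
      Finset.sum_congr rfl (fun k _ => by ring)
    rw [this]
    linarith [hbin]
  have hfinal : (n : ℝ) * (m * c0) = m / p * (1 - (1-p) ^ n) := by
    rw [← hkey]
    field_simp
  rw [hfinal]
end

section
/- With the setup of the empirical conditional-mean estimator: for z > γ and t ∈ {1,...,n}, P(Z₁ > z, Tₙ = t) = C(n,t) P(Y > z) P(Y > γ)^{t-1} (1 - P(Y > γ))^{n-t}, where Z₁ is the first of the samples among Y₁,...,Yₙ that exceeds γ (in order) and Tₙ = Σᵢ 1{Yᵢ > γ}. -/
open MeasureTheory ProbabilityTheory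

open Classical in
/-- `Z₁`: the value of the first sample among `Y₀, ..., Y_{n-1}` (in order)
exceeding the threshold `γ` (and `0` if none exceeds `γ`). -/
noncomputable def firstExceedance {Ω : Type*} (Y : ℕ → Ω → ℝ) (γ : ℝ) (n : ℕ) (ω : Ω) : ℝ :=
  if hex : ∃ i, i < n ∧ γ < Y i ω then Y (Nat.find hex) ω else 0

/-- Joint distribution of `(Z₁, Tₙ)`: for `z > γ` and `1 ≤ t ≤ n`,
`P(Z₁ > z, Tₙ = t) = C(n,t) P(Y > z) P(Y > γ)^{t-1} (1 - P(Y > γ))^{n-t}`. -/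
theorem stmt_13 {Ω : Type*} [MeasurableSpace Ω] (μ : Measure Ω) [IsProbabilityMeasure μ]
    (Y : ℕ → Ω → ℝ) (hmeas : ∀ i, Measurable (Y i))
    (hindep : iIndepFun Y μ)
    (hident : ∀ i, IdentDistrib (Y i) (Y 0) μ μ)
    (γ : ℝ) (n : ℕ) (z : ℝ) (hz : γ < z) (t : ℕ) (ht1 : 1 ≤ t) (htn : t ≤ n) :
    (μ {ω | z < firstExceedance Y γ n ω ∧
        (∑ i ∈ Finset.range n, if γ < Y i ω then 1 else 0 : ℕ) = t}).toReal =
      (n.choose t : ℝ) * (μ {ω | z < Y 0 ω}).toReal *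
        (μ {ω | γ < Y 0 ω}).toReal ^ (t - 1) *
        (1 - (μ {ω | γ < Y 0 ω}).toReal) ^ (n - t) := by
  classical
  -- the minimum of a finset of naturals (0 if empty)
  set m : Finset ℕ → ℕ := fun S => WithTop.untopD 0 S.min with hm_def
  have hm_eq : ∀ (S : Finset ℕ) (hS : S.Nonempty), m S = S.min' hS := by
    intro S hS
    simp only [hm_def, ← Finset.coe_min' hS]
    exact WithTop.untopD_coe _ _
  have hm_mem : ∀ (S : Finset ℕ), S.Nonempty → m S ∈ S := by
    intro S hS; rw [hm_eq S hS]; exact S.min'_mem hS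
  have hm_le : ∀ (S : Finset ℕ) (hS : S.Nonempty), ∀ a ∈ S, m S ≤ a := by
    intro S hS a ha; rw [hm_eq S hS]; exact S.min'_le a ha
  -- the target sets, per exceedance pattern `S`
  set B : Finset ℕ → ℕ → Set ℝ := fun S i =>
    if i = m S then Set.Ioi z else if i ∈ S then Set.Ioi γ else (Set.Ioi γ)ᶜ with hB_def
  set E : Finset ℕ → Set Ω := fun S => ⋂ i ∈ Finset.range n, Y i ⁻¹' B S i with hE_def
  have hBmeas : ∀ S i, MeasurableSet (B S i) := by
    intro S i
    simp only [hB_def]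
    split_ifs
    · exact measurableSet_Ioi
    · exact measurableSet_Ioi
    · exact measurableSet_Ioi.compl
  -- nonemptiness of patterns
  have hSne : ∀ S ∈ Finset.powersetCard t (Finset.range n), S.Nonempty := by
    intro S hS
    obtain ⟨_, hcard⟩ := Finset.mem_powersetCard.mp hS
    exact Finset.card_pos.mp (by omega)
  -- membership in `E S` determines the pattern
  have hpat : ∀ S ∈ Finset.powersetCard t (Finset.range n), ∀ ω, ω ∈ E S →
      (Finset.range n).filter (fun i => γ < Y i ω) = S := by
    intro S hS ω hω
    obtain ⟨hsub, hcard⟩ := Finset.mem_powersetCard.mp hS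
    have hne := hSne S hS
    have hω' : ∀ i ∈ Finset.range n, Y i ω ∈ B S i := by
      simpa only [hE_def, Set.mem_iInter, Set.mem_preimage] using hω
    ext i
    simp only [Finset.mem_filter]
    constructor
    · rintro ⟨hi, hγ⟩
      by_contra hiS
      have := hω' i hi
      have him : i ≠ m S := fun h => hiS (h ▸ hm_mem S hne)
      simp only [hB_def, if_neg him, if_neg hiS, Set.mem_compl_iff, Set.mem_Ioi] at this
      exact this hγ
    · intro hiS
      have hi : i ∈ Finset.range n := hsub hiS
      refine ⟨hi, ?_⟩
      have := hω' i hi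
      by_cases him : i = m S
      · simp only [hB_def, if_pos him, Set.mem_Ioi] at this
        exact lt_trans hz this
      · simp only [hB_def, if_neg him, if_pos hiS, Set.mem_Ioi] at this
        exact this
  -- the main set identity
  have hEset : {ω | z < firstExceedance Y γ n ω ∧
      (∑ i ∈ Finset.range n, if γ < Y i ω then 1 else 0 : ℕ) = t} =
      ⋃ S ∈ Finset.powersetCard t (Finset.range n), E S := by
    ext ω
    simp only [Set.mem_setOf_eq, Set.mem_iUnion, exists_prop]
    have hsum : (∑ i ∈ Finset.range n, if γ < Y i ω then 1 else 0 : ℕ) =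
        ((Finset.range n).filter (fun i => γ < Y i ω)).card :=
      (Finset.card_filter _ _).symm
    constructor
    · rintro ⟨hzω, hsum_t⟩
      set S := (Finset.range n).filter (fun i => γ < Y i ω) with hSdef
      have hcard : S.card = t := by rw [← hsum, hsum_t]
      have hne : S.Nonempty := Finset.card_pos.mp (by omega)
      have hmS : m S ∈ S := hm_mem S hne
      have hmem : m S < n ∧ γ < Y (m S) ω := by
        have := Finset.mem_filter.mp hmS
        exact ⟨Finset.mem_range.mp this.1, this.2⟩
      have hex : ∃ i, i < n ∧ γ < Y i ω := ⟨m S, hmem⟩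
      have hfind : Nat.find hex = m S := by
        rw [Nat.find_eq_iff]
        refine ⟨hmem, fun j hj hjc => ?_⟩
        have : j ∈ S := Finset.mem_filter.mpr ⟨Finset.mem_range.mpr hjc.1, hjc.2⟩
        exact absurd (hm_le S hne j this) (not_le.mpr hj)
      have hfe : firstExceedance Y γ n ω = Y (m S) ω := by
        rw [firstExceedance, dif_pos hex, hfind]
      refine ⟨S, Finset.mem_powersetCard.mpr ⟨Finset.filter_subset _ _, hcard⟩, ?_⟩
      simp only [hE_def, Set.mem_iInter, Set.mem_preimage]
      intro i hi
      by_cases him : i = m S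
      · subst him
        simp only [hB_def, if_pos rfl, Set.mem_Ioi]
        rw [← hfe]; exact hzω
      · by_cases hiS : i ∈ S
        · simp only [hB_def, if_neg him, if_pos hiS, Set.mem_Ioi]
          exact (Finset.mem_filter.mp hiS).2
        · simp only [hB_def, if_neg him, if_neg hiS, Set.mem_compl_iff, Set.mem_Ioi]
          intro hγ
          exact hiS (Finset.mem_filter.mpr ⟨hi, hγ⟩)
    · rintro ⟨S, hSmem, hωE⟩
      obtain ⟨hsub, hcard⟩ := Finset.mem_powersetCard.mp hSmem
      have hne := hSne S hSmem
      have hfilter := hpat S hSmem ω hωE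
      have hω' : ∀ i ∈ Finset.range n, Y i ω ∈ B S i := by
        simpa only [hE_def, Set.mem_iInter, Set.mem_preimage] using hωE
      have hmS : m S ∈ S := hm_mem S hne
      have hmz : z < Y (m S) ω := by
        have := hω' (m S) (hsub hmS)
        simpa only [hB_def, if_pos rfl, Set.mem_Ioi] using this
      have hmem : m S < n ∧ γ < Y (m S) ω :=
        ⟨Finset.mem_range.mp (hsub hmS), lt_trans hz hmz⟩
      have hex : ∃ i, i < n ∧ γ < Y i ω := ⟨m S, hmem⟩
      have hfind : Nat.find hex = m S := by
        rw [Nat.find_eq_iff]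
        refine ⟨hmem, fun j hj hjc => ?_⟩
        have : j ∈ S := hfilter ▸ Finset.mem_filter.mpr ⟨Finset.mem_range.mpr hjc.1, hjc.2⟩
        exact absurd (hm_le S hne j this) (not_le.mpr hj)
      constructor
      · rw [firstExceedance, dif_pos hex, hfind]; exact hmz
      · rw [hsum, hfilter, hcard]
  -- pairwise disjointness
  have hdisj : (↑(Finset.powersetCard t (Finset.range n)) : Set (Finset ℕ)).PairwiseDisjoint E := by
    intro S hS S' hS' hne
    simp only [Finset.mem_coe] at hS hS'
    refine Set.disjoint_left.mpr fun ω hω hω' => ?_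
    exact hne ((hpat S hS ω hω).symm.trans (hpat S' hS' ω hω'))
  have hEmeas : ∀ S ∈ Finset.powersetCard t (Finset.range n), MeasurableSet (E S) := by
    intro S _
    exact MeasurableSet.biInter (Finset.range n).countable_toSet
      fun i _ => (hmeas i) (hBmeas S i)
  -- probability of each piece
  set p : ENNReal := μ {ω | γ < Y 0 ω} with hp_def
  set pz : ENNReal := μ {ω | z < Y 0 ω} with hpz_def
  have hp_le : p ≤ 1 := prob_le_one
  have hμE : ∀ S ∈ Finset.powersetCard t (Finset.range n),
      μ (E S) = pz * p ^ (t - 1) * (1 - p) ^ (n - t) := by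
    intro S hS
    obtain ⟨hsub, hcard⟩ := Finset.mem_powersetCard.mp hS
    have hne := hSne S hS
    have hmS : m S ∈ S := hm_mem S hne
    rw [hE_def]
    rw [hindep.meas_biInter (fun i _ => ⟨B S i, hBmeas S i, rfl⟩)]
    have hident' : ∀ i, μ (Y i ⁻¹' B S i) = μ (Y 0 ⁻¹' B S i) :=
      fun i => (hident i).measure_mem_eq (hBmeas S i)
    calc ∏ i ∈ Finset.range n, μ (Y i ⁻¹' B S i)
        = ∏ i ∈ Finset.range n, μ (Y 0 ⁻¹' B S i) := Finset.prod_congr rfl fun i _ => hident' i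
      _ = (∏ i ∈ Finset.range n \ S, μ (Y 0 ⁻¹' B S i)) *
          ∏ i ∈ S, μ (Y 0 ⁻¹' B S i) := (Finset.prod_sdiff hsub).symm
      _ = (1 - p) ^ (n - t) * (pz * p ^ (t - 1)) := by
          congr 1
          · rw [Finset.prod_congr rfl (fun i hi => ?_), Finset.prod_const,
              Finset.card_sdiff_of_subset hsub, Finset.card_range, hcard]
            have hiS : i ∉ S := (Finset.mem_sdiff.mp hi).2
            have him : i ≠ m S := fun h => hiS (h ▸ hmS)
            simp only [hB_def, if_neg him, if_neg hiS]
            rw [Set.preimage_compl, prob_compl_eq_one_sub ((hmeas 0) measurableSet_Ioi)]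
            congr 1
          · rw [← Finset.mul_prod_erase S _ hmS]
            congr 1
            · simp only [hB_def, if_pos rfl]; rfl
            · rw [Finset.prod_congr rfl (fun i hi => ?_), Finset.prod_const,
                Finset.card_erase_of_mem hmS, hcard]
              have him : i ≠ m S := (Finset.mem_erase.mp hi).1
              have hiS : i ∈ S := (Finset.mem_erase.mp hi).2
              simp only [hB_def, if_neg him, if_pos hiS]
              rfl
      _ = pz * p ^ (t - 1) * (1 - p) ^ (n - t) := by ring
  -- put it together
  rw [hEset, measure_biUnion_finset hdisj hEmeas,
    Finset.sum_congr rfl hμE, Finset.sum_const, Finset.card_powersetCard, Finset.card_range,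
    nsmul_eq_mul]
  have hp_ne : p ≠ ⊤ := (lt_of_le_of_lt hp_le ENNReal.one_lt_top).ne
  have hpz_ne : pz ≠ ⊤ := (lt_of_le_of_lt prob_le_one ENNReal.one_lt_top).ne
  have h1p_ne : (1 - p) ≠ ⊤ := (lt_of_le_of_lt tsub_le_self ENNReal.one_lt_top).ne
  rw [ENNReal.toReal_mul, ENNReal.toReal_mul, ENNReal.toReal_mul, ENNReal.toReal_pow,
    ENNReal.toReal_pow,
    ENNReal.toReal_sub_of_le hp_le ENNReal.one_ne_top, ENNReal.toReal_one]
  rw [ENNReal.toReal_natCast]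
  ring
end
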